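/- arXiv:2402.14050 — 6 statements merged into one kernel-verified Lean document; each statement's English description precedes it below -/
import Mathlib

section
/- For every k ∈ ℤ there exists a constant C_k > 0 such that for all r, t ∈ ℝ one has |S_k(r,t)| ≤ C_k · (1 + ((1+|2r−t|)/(1+|r|))^{|k|}). -/
/-- The rising factorial (Pochhammer symbol) `(b)_m = b(b+1)⋯(b+m-1)`, with `(b)_0 = 1`. -/
noncomputable def poch (b : ℂ) (m : ℕ) : ℂ := ∏ j ∈ Finset.range m, (b + j)

/-- The terminating hypergeometric sum
`S_k(r,t) = ₄F₃(-k, k, 1/4 + i(-2r+t)/2, 1/4 + it/2; 1/2, 1/2 - ir, 1/2 + it; 1)`. -/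
noncomputable def hypS (k : ℤ) (r t : ℝ) : ℂ :=
  ∑ m ∈ Finset.range (k.natAbs + 1),
    (poch (-(k : ℂ)) m * poch (k : ℂ) m * poch (1/4 + Complex.I * (-(2*r) + t) / 2) m *
        poch (1/4 + Complex.I * t / 2) m) /
    (poch (1/2) m * poch (1/2 - Complex.I * r) m * poch (1/2 + Complex.I * t) m *
        (Nat.factorial m : ℂ))

lemma abs_poch_le (b : ℂ) (m : ℕ) (c : ℝ) (hc : 0 ≤ c)
    (h : ∀ j ∈ Finset.range m, ‖b + j‖ ≤ c) :
    ‖poch b m‖ ≤ c ^ m := by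
  rw [poch, norm_prod]
  calc ∏ j ∈ Finset.range m, ‖b + j‖ ≤ ∏ _j ∈ Finset.range m, c :=
        Finset.prod_le_prod (fun j _ => (norm_nonneg _)) h
    _ = c ^ m := by simp

lemma le_abs_poch (b : ℂ) (m : ℕ) (c : ℝ) (hc : 0 ≤ c)
    (h : ∀ j ∈ Finset.range m, c ≤ ‖b + j‖) :
    c ^ m ≤ ‖poch b m‖ := by
  rw [poch, norm_prod]
  calc c ^ m = ∏ _j ∈ Finset.range m, c := by simp
    _ ≤ ∏ j ∈ Finset.range m, ‖b + j‖ :=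
        Finset.prod_le_prod (fun _ _ => hc) h

lemma aux_lb (s : ℝ) (j : ℕ) :
    (1 + |s|) / 4 ≤ ‖1/2 + Complex.I * s + j‖ := by
  have h1 : |((1/2 + Complex.I * s + j : ℂ)).re| ≤ ‖1/2 + Complex.I * s + j‖ :=
    Complex.abs_re_le_norm _
  have h2 : |((1/2 + Complex.I * s + j : ℂ)).im| ≤ ‖1/2 + Complex.I * s + j‖ :=
    Complex.abs_im_le_norm _
  have hre : ((1/2 + Complex.I * s + j : ℂ)).re = 1/2 + j := by simp
  have him : ((1/2 + Complex.I * s + j : ℂ)).im = s := by simp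
  rw [hre] at h1
  rw [him] at h2
  have hj : (0:ℝ) ≤ j := Nat.cast_nonneg j
  have : |(1/2 + (j:ℝ))| = 1/2 + j := abs_of_nonneg (by linarith)
  rw [this] at h1
  linarith

lemma aux_ub (s : ℝ) (K : ℕ) (j : ℕ) (hj : j < K + 1) :
    ‖1/4 + Complex.I * s / 2 + j‖ ≤ (K + 1) * (1 + |s|) := by
  have h1 : ‖1/4 + Complex.I * s / 2 + j‖ ≤
      ‖(1/4 : ℂ) + (j:ℂ)‖ + ‖Complex.I * s / 2‖ := by
    have : (1/4 + Complex.I * s / 2 + (j:ℂ)) = ((1/4 : ℂ) + (j:ℂ)) + Complex.I * s / 2 := by ring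
    rw [this]; exact norm_add_le _ _
  have h2 : ‖(1/4 : ℂ) + (j:ℂ)‖ = 1/4 + j := by
    rw [show ((1/4 : ℂ) + (j:ℂ)) = ((1/4 + j : ℝ) : ℂ) by push_cast; ring,
      Complex.norm_real, Real.norm_eq_abs]
    exact abs_of_nonneg (by positivity)
  have h3 : ‖Complex.I * s / 2‖ = |s| / 2 := by
    simp [norm_div, Complex.norm_real]
  have hjK : (j:ℝ) ≤ K := by exact_mod_cast Nat.lt_succ_iff.mp hj
  have hs : (0:ℝ) ≤ |s| := abs_nonneg s
  have hK : (0:ℝ) ≤ K := Nat.cast_nonneg K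
  rw [h2, h3] at h1
  nlinarith

lemma aux_int (k : ℤ) (j : ℕ) (hj : j < k.natAbs + 1) :
    ‖-(k:ℂ) + j‖ ≤ 2 * k.natAbs + 1 ∧
    ‖(k:ℂ) + j‖ ≤ 2 * k.natAbs + 1 := by
  have hjK : (j:ℝ) ≤ k.natAbs := by exact_mod_cast Nat.lt_succ_iff.mp hj
  have hk : ‖(k:ℂ)‖ = |(k:ℝ)| := by
    rw [show ((k:ℂ)) = ((k:ℝ):ℂ) by push_cast; ring, Complex.norm_real, Real.norm_eq_abs]
  have hkk : |(k:ℝ)| = (k.natAbs : ℝ) := by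
    simp [Nat.cast_natAbs]
  constructor
  · calc ‖-(k:ℂ) + j‖ ≤ ‖-(k:ℂ)‖ + ‖(j:ℂ)‖ :=
        norm_add_le _ _
      _ ≤ 2 * k.natAbs + 1 := by
        rw [norm_neg, hk, hkk, Complex.norm_natCast]; linarith
  · calc ‖(k:ℂ) + j‖ ≤ ‖(k:ℂ)‖ + ‖(j:ℂ)‖ :=
        norm_add_le _ _
      _ ≤ 2 * k.natAbs + 1 := by
        rw [hk, hkk, Complex.norm_natCast]; linarith


/-- (Lemma `4F3bound`.) For every `k ∈ ℤ` there is `C_k > 0` with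
`|S_k(r,t)| ≤ C_k (1 + ((1+|2r-t|)/(1+|r|))^{|k|})` for all `r, t ∈ ℝ`. -/
theorem stmt2 (k : ℤ) :
    ∃ C : ℝ, 0 < C ∧ ∀ r t : ℝ,
      ‖hypS k r t‖ ≤
        C * (1 + ((1 + |2*r - t|) / (1 + |r|)) ^ k.natAbs) := by
  set K := k.natAbs with hK
  set A : ℝ := 32 * (2*K+1)^2 * (K+1)^2 with hA
  have hK0 : (0:ℝ) ≤ K := Nat.cast_nonneg K
  have hA1 : (1:ℝ) ≤ A := by nlinarith
  refine ⟨(K+1) * A^K, by positivity, fun r t => ?_⟩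
  set X : ℝ := (1 + |2*r - t|) / (1 + |r|) with hX
  have hr : (0:ℝ) < 1 + |r| := by positivity
  have ht : (0:ℝ) < 1 + |t| := by positivity
  have hu : (0:ℝ) ≤ |2*r - t| := abs_nonneg _
  have hXpos : 0 < X := div_pos (by positivity) hr
  have key : ∀ m ∈ Finset.range (K+1),
      ‖(poch (-(k : ℂ)) m * poch (k : ℂ) m *
          poch (1/4 + Complex.I * (-(2*r) + t) / 2) m *
          poch (1/4 + Complex.I * t / 2) m) /
        (poch (1/2) m * poch (1/2 - Complex.I * r) m * poch (1/2 + Complex.I * t) m *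
          (Nat.factorial m : ℂ))‖ ≤ A^K * (1 + X^K) := by
    intro m hm
    rw [Finset.mem_range] at hm
    have hmK : m ≤ K := Nat.lt_succ_iff.mp hm
    have b1 : ‖poch (-(k : ℂ)) m‖ ≤ (2*K+1)^m :=
      abs_poch_le _ _ _ (by positivity) (fun j hj => by
        rw [Finset.mem_range] at hj
        exact (aux_int k j (by omega)).1)
    have b2 : ‖poch ((k : ℂ)) m‖ ≤ (2*K+1)^m :=
      abs_poch_le _ _ _ (by positivity) (fun j hj => by
        rw [Finset.mem_range] at hj
        exact (aux_int k j (by omega)).2)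
    have b3 : ‖poch (1/4 + Complex.I * (-(2*r) + t) / 2) m‖ ≤
        ((K+1)*(1+|2*r - t|))^m :=
      abs_poch_le _ _ _ (by positivity) (fun j hj => by
        rw [Finset.mem_range] at hj
        have e : (1/4 + Complex.I * (-(2*(r:ℂ)) + (t:ℂ)) / 2 + (j:ℂ)) =
            (1/4 + Complex.I * ((-(2*r)+t : ℝ):ℂ) / 2 + (j:ℂ)) := by push_cast; ring
        rw [e]
        have h := aux_ub (-(2*r)+t) K j (by omega)
        have e2 : |(-(2*r)+t)| = |2*r - t| := by
          rw [show -(2*r)+t = -(2*r-t) by ring, abs_neg]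
        rw [e2] at h
        exact h)
    have b4 : ‖poch (1/4 + Complex.I * t / 2) m‖ ≤ ((K+1)*(1+|t|))^m :=
      abs_poch_le _ _ _ (by positivity) (fun j hj => by
        rw [Finset.mem_range] at hj
        exact aux_ub t K j (by omega))
    have c1 : ((1:ℝ)/2)^m ≤ ‖poch (1/2) m‖ :=
      le_abs_poch _ _ _ (by norm_num) (fun j hj => by
        have e : ((1/2:ℂ) + (j:ℂ)) = ((1/2 + (j:ℝ) : ℝ) : ℂ) := by push_cast; ring
        have hj0 : (0:ℝ) ≤ (j:ℝ) := Nat.cast_nonneg j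
        rw [e, Complex.norm_real, Real.norm_eq_abs, abs_of_nonneg (by positivity)]
        linarith)
    have c2 : ((1+|r|)/4)^m ≤ ‖poch (1/2 - Complex.I * r) m‖ :=
      le_abs_poch _ _ _ (by positivity) (fun j hj => by
        have h := aux_lb (-r) j
        rw [abs_neg] at h
        have e : (1/2 - Complex.I * (r:ℂ) + (j:ℂ)) =
            (1/2 + Complex.I * ((-r : ℝ):ℂ) + (j:ℂ)) := by push_cast; ring
        rw [e]
        exact h)
    have c3 : ((1+|t|)/4)^m ≤ ‖poch (1/2 + Complex.I * t) m‖ :=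
      le_abs_poch _ _ _ (by positivity) (fun j hj => aux_lb t j)
    have c4 : (1:ℝ) ≤ ‖(Nat.factorial m : ℂ)‖ := by
      rw [Complex.norm_natCast]
      exact_mod_cast Nat.one_le_iff_ne_zero.mpr (Nat.factorial_ne_zero m)
    rw [norm_div]
    have habs : ∀ z : ℂ, 0 ≤ ‖z‖ := fun z => norm_nonneg z
    have hNle : ‖poch (-(k : ℂ)) m * poch (k : ℂ) m *
          poch (1/4 + Complex.I * (-(2*r) + t) / 2) m *
          poch (1/4 + Complex.I * t / 2) m‖ ≤
        (2*K+1)^m * (2*K+1)^m * ((K+1)*(1+|2*r - t|))^m * ((K+1)*(1+|t|))^m := by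
      rw [norm_mul, norm_mul, norm_mul]
      exact mul_le_mul (mul_le_mul (mul_le_mul b1 b2 (habs _) (by positivity))
        b3 (habs _) (by positivity)) b4 (habs _) (by positivity)
    have hDge : ((1:ℝ)/2)^m * ((1+|r|)/4)^m * ((1+|t|)/4)^m * 1 ≤
        ‖poch (1/2) m * poch (1/2 - Complex.I * r) m *
          poch (1/2 + Complex.I * t) m * (Nat.factorial m : ℂ)‖ := by
      rw [norm_mul, norm_mul, norm_mul]
      exact mul_le_mul (mul_le_mul (mul_le_mul c1 c2 (by positivity) (habs _))
        c3 (by positivity) (by positivity)) c4 (by norm_num) (by positivity)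
    have hDb_pos : (0:ℝ) < ((1:ℝ)/2)^m * ((1+|r|)/4)^m * ((1+|t|)/4)^m * 1 := by positivity
    have step1 := div_le_div₀ (by positivity :
        (0:ℝ) ≤ (2*K+1)^m * (2*K+1)^m * ((K+1)*(1+|2*r - t|))^m * ((K+1)*(1+|t|))^m)
      hNle hDb_pos hDge
    refine le_trans step1 ?_
    have hEq : (2*K+1:ℝ)^m * (2*K+1)^m * ((K+1)*(1+|2*r - t|))^m * ((K+1)*(1+|t|))^m /
        (((1:ℝ)/2)^m * ((1+|r|)/4)^m * ((1+|t|)/4)^m * 1) = (A * X)^m := by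
      rw [mul_one, ← mul_pow, ← mul_pow, ← mul_pow, ← mul_pow, ← mul_pow, ← div_pow]
      congr 1
      rw [hX, hA]
      field_simp
      ring
    rw [hEq, mul_pow]
    have h1 : A^m ≤ A^K := pow_le_pow_right₀ hA1 hmK
    have h2 : X^m ≤ 1 + X^K := by
      rcases le_or_gt X 1 with h | h
      · have e1 : X^m ≤ 1 := pow_le_one₀ hXpos.le h
        have e2 : (0:ℝ) ≤ X^K := by positivity
        linarith
      · have e1 : X^m ≤ X^K := pow_le_pow_right₀ h.le hmK
        linarith
    exact mul_le_mul h1 h2 (by positivity) (by positivity)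
  calc ‖hypS k r t‖ ≤
      ∑ m ∈ Finset.range (K+1),
        ‖(poch (-(k : ℂ)) m * poch (k : ℂ) m *
            poch (1/4 + Complex.I * (-(2*r) + t) / 2) m *
            poch (1/4 + Complex.I * t / 2) m) /
          (poch (1/2) m * poch (1/2 - Complex.I * r) m * poch (1/2 + Complex.I * t) m *
            (Nat.factorial m : ℂ))‖ := by
        rw [hypS]
        exact norm_sum_le _ _
    _ ≤ ∑ _m ∈ Finset.range (K+1), A^K * (1 + X^K) := Finset.sum_le_sum key
    _ = (K+1) * A^K * (1 + X^K) := by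
        rw [Finset.sum_const, Finset.card_range, nsmul_eq_mul]
        push_cast
        ring
    _ = (K+1) * A^K * (1 + X^K) := rfl
end

section
/- For every k ∈ ℤ there exists a constant C_k > 0 such that for all integers m with 0 ≤ m ≤ |k| and all r, t ∈ ℝ one has |Γ(m + 1/4 + i(t−2r)/2) · Γ(m + 1/4 + it/2) · Γ(1/2 − ir) · Γ(1/2 + it)| / |Γ(1/4 + i(t−2r)/2) · Γ(1/4 + it/2) · Γ(1/2 + m − ir) · Γ(1/2 + m + it)| ≤ C_k · ((1+|2r−t|)/(1+|r|))^m. -/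
set_option maxHeartbeats 1000000

open Finset

lemma gamma_shift (z : ℂ) (hz : 0 < z.re) (m : ℕ) :
    Complex.Gamma ((m:ℂ) + z) = (∏ j ∈ Finset.range m, (z + j)) * Complex.Gamma z := by
  induction m with
  | zero => simp
  | succ n ih =>
    have h0 : ((n:ℂ) + z) ≠ 0 := by
      intro h
      have := congrArg Complex.re h
      simp at this
      nlinarith [this, (Nat.cast_nonneg n : (0:ℝ) ≤ n)]
    have he : (((n+1:ℕ)):ℂ) + z = ((n:ℂ) + z) + 1 := by push_cast; ring
    rw [he, Complex.Gamma_add_one _ h0, ih, Finset.prod_range_succ]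
    ring

lemma abs_gamma_shift (x y : ℝ) (hx : 0 < x) (m : ℕ) :
    ‖Complex.Gamma ((m:ℂ) + ((x:ℂ) + (y:ℂ) * Complex.I))‖ =
      (∏ j ∈ Finset.range m, Real.sqrt ((x+j)^2 + y^2)) *
        ‖Complex.Gamma ((x:ℂ) + (y:ℂ) * Complex.I)‖ := by
  rw [gamma_shift _ (by simp [hx]) m, norm_mul, norm_prod]
  congr 1
  apply Finset.prod_congr rfl
  intro j _
  have : ((x:ℂ) + (y:ℂ) * Complex.I + j) = (((x + j : ℝ)):ℂ) + ((y:ℝ):ℂ) * Complex.I := by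
    push_cast; ring
  rw [this, Complex.norm_add_mul_I]

lemma abs_gamma_pos (x y : ℝ) (hx : 0 < x) :
    0 < ‖Complex.Gamma ((x:ℂ) + (y:ℂ) * Complex.I)‖ := by
  apply norm_pos_iff.mpr
  apply Complex.Gamma_ne_zero
  intro n h
  have := congrArg Complex.re h
  simp at this
  nlinarith [(Nat.cast_nonneg n : (0:ℝ) ≤ n)]

lemma factor_bound (K j : ℕ) (hj : j < K) (r t : ℝ) :
    Real.sqrt ((1/4 + (j:ℝ))^2 + ((t - 2*r)/2)^2) * Real.sqrt ((1/4 + (j:ℝ))^2 + (t/2)^2) ≤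
      (4*(K:ℝ)+2) * ((1 + |2*r - t|) / (1 + |r|)) *
        (Real.sqrt ((1/2 + (j:ℝ))^2 + (-r)^2) * Real.sqrt ((1/2 + (j:ℝ))^2 + t^2)) := by
  set u := |2*r - t| with hu
  set v := |r| with hv
  have hu0 : 0 ≤ u := abs_nonneg _
  have hv0 : 0 ≤ v := abs_nonneg _
  have hu2 : u^2 = (2*r - t)^2 := sq_abs _
  have hv2 : v^2 = r^2 := sq_abs _
  have hj0 : (0:ℝ) ≤ (j:ℝ) := Nat.cast_nonneg j
  have hjK : (j:ℝ) + 1 ≤ (K:ℝ) := by exact_mod_cast hj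
  have sB := Real.sqrt_nonneg ((1/4 + (j:ℝ))^2 + (t/2)^2)
  have sC := Real.sqrt_nonneg ((1/2 + (j:ℝ))^2 + (-r)^2)
  have sD := Real.sqrt_nonneg ((1/2 + (j:ℝ))^2 + t^2)
  have hA : Real.sqrt ((1/4 + (j:ℝ))^2 + ((t - 2*r)/2)^2) ≤ ((j:ℝ)+1/2) * (1+u) := by
    rw [show (((j:ℝ)+1/2) * (1+u)) = Real.sqrt ((((j:ℝ)+1/2) * (1+u))^2) from
      (Real.sqrt_sq (by positivity)).symm]
    apply Real.sqrt_le_sqrt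
    nlinarith [hu2, mul_nonneg hj0 hu0, mul_nonneg (mul_nonneg hj0 hj0) (mul_nonneg hu0 hu0),
      mul_nonneg hj0 (mul_nonneg hu0 hu0)]
  have hB : Real.sqrt ((1/4 + (j:ℝ))^2 + (t/2)^2) ≤ Real.sqrt ((1/2 + (j:ℝ))^2 + t^2) := by
    apply Real.sqrt_le_sqrt
    nlinarith [sq_nonneg t]
  have hC : (1 + v) / 4 ≤ Real.sqrt ((1/2 + (j:ℝ))^2 + (-r)^2) := by
    rw [show ((1+v)/4) = Real.sqrt (((1+v)/4)^2) from (Real.sqrt_sq (by positivity)).symm]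
    apply Real.sqrt_le_sqrt
    nlinarith [sq_nonneg (1 - v), mul_nonneg hj0 hj0]
  have hx : (0:ℝ) < 1 + v := by linarith
  rw [show (4*(K:ℝ)+2) * ((1 + u) / (1 + v)) *
        (Real.sqrt ((1/2 + (j:ℝ))^2 + (-r)^2) * Real.sqrt ((1/2 + (j:ℝ))^2 + t^2)) =
      ((4*(K:ℝ)+2) * (1 + u) *
        (Real.sqrt ((1/2 + (j:ℝ))^2 + (-r)^2) * Real.sqrt ((1/2 + (j:ℝ))^2 + t^2))) / (1+v)
      from by ring, le_div_iff₀ hx]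
  calc Real.sqrt ((1/4 + (j:ℝ))^2 + ((t - 2*r)/2)^2) *
        Real.sqrt ((1/4 + (j:ℝ))^2 + (t/2)^2) * (1+v)
      ≤ (((j:ℝ)+1/2) * (1+u)) * Real.sqrt ((1/2 + (j:ℝ))^2 + t^2) *
        (4 * Real.sqrt ((1/2 + (j:ℝ))^2 + (-r)^2)) := by
        apply mul_le_mul (mul_le_mul hA hB sB (by positivity)) (by linarith) (by linarith)
          (by positivity)
    _ = (4*(j:ℝ)+2) * (1+u) *
        (Real.sqrt ((1/2 + (j:ℝ))^2 + (-r)^2) * Real.sqrt ((1/2 + (j:ℝ))^2 + t^2)) := by ring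
    _ ≤ (4*(K:ℝ)+2) * (1+u) *
        (Real.sqrt ((1/2 + (j:ℝ))^2 + (-r)^2) * Real.sqrt ((1/2 + (j:ℝ))^2 + t^2)) := by
        apply mul_le_mul_of_nonneg_right _ (by positivity)
        apply mul_le_mul_of_nonneg_right _ (by linarith)
        linarith


/-- (Summand bound in the proof of Lemma `4F3bound`.)
For every `k ∈ ℤ` there exists `C_k > 0` such that for all integers `0 ≤ m ≤ |k|` and all
`r, t ∈ ℝ`,
`|Γ(m + 1/4 + i(t-2r)/2) Γ(m + 1/4 + it/2) Γ(1/2 - ir) Γ(1/2 + it)| /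
 |Γ(1/4 + i(t-2r)/2) Γ(1/4 + it/2) Γ(1/2 + m - ir) Γ(1/2 + m + it)|
  ≤ C_k ((1+|2r-t|)/(1+|r|))^m`. -/
theorem stmt3 (k : ℤ) :
    ∃ C : ℝ, 0 < C ∧ ∀ m : ℕ, m ≤ k.natAbs → ∀ r t : ℝ,
      ‖Complex.Gamma ((m : ℂ) + 1/4 + Complex.I * (t - 2*r) / 2) *
          Complex.Gamma ((m : ℂ) + 1/4 + Complex.I * t / 2) *
          Complex.Gamma (1/2 - Complex.I * r) *
          Complex.Gamma (1/2 + Complex.I * t)‖ /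
        ‖Complex.Gamma (1/4 + Complex.I * (t - 2*r) / 2) *
          Complex.Gamma (1/4 + Complex.I * t / 2) *
          Complex.Gamma (1/2 + (m : ℂ) - Complex.I * r) *
          Complex.Gamma (1/2 + (m : ℂ) + Complex.I * t)‖ ≤
        C * ((1 + |2*r - t|) / (1 + |r|)) ^ m := by
  set K := k.natAbs with hK
  refine ⟨(4*(K:ℝ)+2)^K, by positivity, ?_⟩
  intro m hm r t
  have e1 : (m : ℂ) + 1/4 + Complex.I * ((t:ℂ) - 2*(r:ℂ)) / 2
      = (m:ℂ) + (((1/4 : ℝ):ℂ) + (((t - 2*r)/2 : ℝ):ℂ) * Complex.I) := by push_cast; ring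
  have e2 : (m : ℂ) + 1/4 + Complex.I * (t:ℂ) / 2
      = (m:ℂ) + (((1/4 : ℝ):ℂ) + ((t/2 : ℝ):ℂ) * Complex.I) := by push_cast; ring
  have e3 : 1/2 + (m : ℂ) - Complex.I * (r:ℂ)
      = (m:ℂ) + (((1/2 : ℝ):ℂ) + ((-r : ℝ):ℂ) * Complex.I) := by push_cast; ring
  have e4 : 1/2 + (m : ℂ) + Complex.I * (t:ℂ)
      = (m:ℂ) + (((1/2 : ℝ):ℂ) + ((t : ℝ):ℂ) * Complex.I) := by push_cast; ring
  have f1 : (1/4 : ℂ) + Complex.I * ((t:ℂ) - 2*(r:ℂ)) / 2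
      = ((1/4 : ℝ):ℂ) + (((t - 2*r)/2 : ℝ):ℂ) * Complex.I := by push_cast; ring
  have f2 : (1/4 : ℂ) + Complex.I * (t:ℂ) / 2
      = ((1/4 : ℝ):ℂ) + ((t/2 : ℝ):ℂ) * Complex.I := by push_cast; ring
  have f3 : (1/2 : ℂ) - Complex.I * (r:ℂ)
      = ((1/2 : ℝ):ℂ) + ((-r : ℝ):ℂ) * Complex.I := by push_cast; ring
  have f4 : (1/2 : ℂ) + Complex.I * (t:ℂ)
      = ((1/2 : ℝ):ℂ) + ((t : ℝ):ℂ) * Complex.I := by push_cast; ring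
  rw [e1, e2, e3, e4, f1, f2, f3, f4]
  simp only [norm_mul]
  rw [abs_gamma_shift (1/4) ((t - 2*r)/2) (by norm_num) m,
      abs_gamma_shift (1/4) (t/2) (by norm_num) m,
      abs_gamma_shift (1/2) (-r) (by norm_num) m,
      abs_gamma_shift (1/2) t (by norm_num) m]
  set gA := ‖Complex.Gamma (((1/4 : ℝ):ℂ) + (((t - 2*r)/2 : ℝ):ℂ) * Complex.I)‖
    with hgA
  set gB := ‖Complex.Gamma (((1/4 : ℝ):ℂ) + ((t/2 : ℝ):ℂ) * Complex.I)‖ with hgB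
  set gC := ‖Complex.Gamma (((1/2 : ℝ):ℂ) + ((-r : ℝ):ℂ) * Complex.I)‖ with hgC
  set gD := ‖Complex.Gamma (((1/2 : ℝ):ℂ) + ((t : ℝ):ℂ) * Complex.I)‖ with hgD
  have hgA0 : 0 < gA := abs_gamma_pos _ _ (by norm_num)
  have hgB0 : 0 < gB := abs_gamma_pos _ _ (by norm_num)
  have hgC0 : 0 < gC := abs_gamma_pos _ _ (by norm_num)
  have hgD0 : 0 < gD := abs_gamma_pos _ _ (by norm_num)
  set PA := ∏ j ∈ Finset.range m, Real.sqrt ((1/4 + (j:ℝ))^2 + ((t - 2*r)/2)^2) with hPA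
  set PB := ∏ j ∈ Finset.range m, Real.sqrt ((1/4 + (j:ℝ))^2 + (t/2)^2) with hPB
  set PC := ∏ j ∈ Finset.range m, Real.sqrt ((1/2 + (j:ℝ))^2 + (-r)^2) with hPC
  set PD := ∏ j ∈ Finset.range m, Real.sqrt ((1/2 + (j:ℝ))^2 + t^2) with hPD
  have hPA0 : 0 ≤ PA := Finset.prod_nonneg fun j _ => Real.sqrt_nonneg _
  have hPB0 : 0 ≤ PB := Finset.prod_nonneg fun j _ => Real.sqrt_nonneg _
  have hPC0 : 0 < PC := Finset.prod_pos fun j _ => Real.sqrt_pos.mpr (by positivity)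
  have hPD0 : 0 < PD := Finset.prod_pos fun j _ => Real.sqrt_pos.mpr (by positivity)
  have hratio : PA * gA * (PB * gB) * gC * gD / (gA * gB * (PC * gC) * (PD * gD))
      = (PA * PB) / (PC * PD) := by
    field_simp
  rw [hratio, div_le_iff₀ (by positivity)]
  set X := (1 + |2*r - t|) / (1 + |r|) with hX
  have hX0 : 0 ≤ X := by positivity
  calc PA * PB = ∏ j ∈ Finset.range m,
        (Real.sqrt ((1/4 + (j:ℝ))^2 + ((t - 2*r)/2)^2) *
          Real.sqrt ((1/4 + (j:ℝ))^2 + (t/2)^2)) := by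
        rw [hPA, hPB, ← Finset.prod_mul_distrib]
    _ ≤ ∏ j ∈ Finset.range m, ((4*(K:ℝ)+2) * X *
        (Real.sqrt ((1/2 + (j:ℝ))^2 + (-r)^2) * Real.sqrt ((1/2 + (j:ℝ))^2 + t^2))) := by
        apply Finset.prod_le_prod (fun j _ => by positivity)
        intro j hj
        exact factor_bound K j (lt_of_lt_of_le (Finset.mem_range.mp hj) hm) r t
    _ = ((4*(K:ℝ)+2) * X)^m * (PC * PD) := by
        rw [Finset.prod_mul_distrib, Finset.prod_const, Finset.card_range,
          Finset.prod_mul_distrib, hPC, hPD]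
    _ = (4*(K:ℝ)+2)^m * (X^m * (PC * PD)) := by rw [mul_pow]; ring
    _ ≤ (4*(K:ℝ)+2)^K * (X^m * (PC * PD)) := by
        apply mul_le_mul_of_nonneg_right _ (by positivity)
        exact pow_le_pow_right₀ (by have := (Nat.cast_nonneg K : (0:ℝ) ≤ K); linarith) hm
    _ = (4*(K:ℝ)+2)^K * X^m * (PC * PD) := by ring
end

section
/- Let (r_ℓ)_{ℓ∈ℕ} be a sequence of real numbers with r_ℓ ≥ 1 for all ℓ, and suppose there is a constant C > 0 such that #{ℓ ∈ ℕ : T−1 < r_ℓ ≤ T} ≤ C·T for every integer T ≥ 1. Then for every ε with 0 < ε < 1/2 there exists a constant C′ > 0 (depending only on C and ε) such that for all real R ≥ 1: Σ_{ℓ∈ℕ} r_ℓ^{−5/2+ε} · (2R + r_ℓ)^{−1/2} · (1 + |2R − r_ℓ|)^{−1/2} ≤ C′/R (in particular the series converges). -/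
open Real ENNReal NNReal

lemma aux_sumInvSqrt (M : ℕ) :
    ∑ j ∈ Finset.range M, (1 + (j:ℝ)) ^ (-(1:ℝ)/2) ≤ 2 * Real.sqrt M := by
  induction M with
  | zero => simp
  | succ M ih =>
    rw [Finset.sum_range_succ]
    have hs : Real.sqrt M ^ 2 = (M:ℝ) := Real.sq_sqrt (by positivity)
    have ht : Real.sqrt ((M:ℝ)+1) ^ 2 = (M:ℝ)+1 := Real.sq_sqrt (by positivity)
    have hts : Real.sqrt M * Real.sqrt (M+1) ≤ (M:ℝ) + 1/2 := by
      nlinarith [Real.sqrt_nonneg (M:ℝ), Real.sqrt_nonneg ((M:ℝ)+1),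
        sq_nonneg (Real.sqrt M * Real.sqrt (M+1) - ((M:ℝ) + 1/2))]
    have htpos : 0 < Real.sqrt ((M:ℝ)+1) := Real.sqrt_pos.2 (by positivity)
    have hterm : (1 + (M:ℝ)) ^ (-(1:ℝ)/2) = (Real.sqrt ((M:ℝ)+1))⁻¹ := by
      rw [show (-(1:ℝ)/2) = -(1/2) by ring, Real.rpow_neg (by positivity),
        ← Real.sqrt_eq_rpow, add_comm]
    rw [hterm]
    have h1 : (Real.sqrt ((M:ℝ)+1))⁻¹ ≤ 2 * Real.sqrt ((M:ℝ)+1) - 2 * Real.sqrt M := by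
      rw [inv_le_iff_one_le_mul₀ htpos]
      nlinarith
    have : ((M+1:ℕ):ℝ) = (M:ℝ)+1 := by push_cast; ring
    rw [this]
    linarith [ih]

lemma aux_windowSum (x : ℝ) (hx : 0 ≤ x) (N : ℕ) (hm : ⌊x⌋₊ ≤ N) :
    ∑ T ∈ Finset.range (N+1), (1 + |x - (T:ℝ)|) ^ (-(1:ℝ)/2) ≤ 3 * Real.sqrt (2*N+1) := by
  set m := ⌊x⌋₊ with hmdef
  set k : ℕ → ℕ := fun T => if T ≤ m then 2*(m-T) else 2*(T-m-1)+1 with hk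
  have hterm : ∀ T ∈ Finset.range (N+1),
      (1 + |x - (T:ℝ)|) ^ (-(1:ℝ)/2) ≤ Real.sqrt 2 * (1 + (k T:ℝ)) ^ (-(1:ℝ)/2) := by
    intro T _
    have hkey : (1 + (k T:ℝ))/2 ≤ 1 + |x - (T:ℝ)| := by
      by_cases hT : T ≤ m
      · have h1 : (T:ℝ) ≤ x := le_trans (by exact_mod_cast Nat.cast_le.2 hT) (Nat.floor_le hx)
        have h2 : ((m:ℝ) - T) ≤ x - T := by
          have := Nat.floor_le hx; simp only [hmdef] at *; linarith
        have habs : (m:ℝ) - T ≤ |x - (T:ℝ)| := le_trans h2 (le_abs_self _)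
        have hcast : (k T : ℝ) = 2*((m:ℝ) - T) := by
          simp only [hk, if_pos hT]; push_cast [Nat.cast_sub hT]; ring
        rw [hcast]; linarith
      · push_neg at hT
        have h1 : x < (T:ℝ) := lt_of_lt_of_le (Nat.lt_floor_add_one x |>.trans_le (by exact_mod_cast Nat.cast_le.2 hT)) le_rfl
        have h2 : (T:ℝ) - (m+1) ≤ T - x := by
          have := Nat.lt_floor_add_one x; simp only [hmdef] at *; linarith
        have habs : (T:ℝ) - (m+1) ≤ |x - (T:ℝ)| := by
          rw [abs_sub_comm]; exact le_trans h2 (le_abs_self _)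
        have hcast : (k T : ℝ) = 2*((T:ℝ) - (m:ℝ) - 1) + 1 := by
          simp only [hk, if_neg (not_le.2 hT)]
          have h5 : T - m - 1 = T - (m+1) := by omega
          have h6 : m + 1 ≤ T := hT
          rw [h5]; push_cast [Nat.cast_sub h6]; ring
        rw [hcast]; linarith
    have hpos : (0:ℝ) < (1 + (k T:ℝ))/2 := by positivity
    calc (1 + |x - (T:ℝ)|) ^ (-(1:ℝ)/2)
        ≤ ((1 + (k T:ℝ))/2) ^ (-(1:ℝ)/2) :=
          Real.rpow_le_rpow_of_nonpos hpos hkey (by norm_num)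
      _ = Real.sqrt 2 * (1 + (k T:ℝ)) ^ (-(1:ℝ)/2) := by
          rw [Real.div_rpow (by positivity) (by norm_num)]
          rw [div_eq_mul_inv, mul_comm]
          congr 1
          rw [show (-(1:ℝ)/2) = -(1/2) by ring, Real.rpow_neg (by norm_num), inv_inv,
            ← Real.sqrt_eq_rpow]
  calc ∑ T ∈ Finset.range (N+1), (1 + |x - (T:ℝ)|) ^ (-(1:ℝ)/2)
      ≤ ∑ T ∈ Finset.range (N+1), Real.sqrt 2 * (1 + (k T:ℝ)) ^ (-(1:ℝ)/2) :=
        Finset.sum_le_sum hterm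
    _ = Real.sqrt 2 * ∑ T ∈ Finset.range (N+1), (1 + (k T:ℝ)) ^ (-(1:ℝ)/2) := by
        rw [Finset.mul_sum]
    _ ≤ Real.sqrt 2 * ∑ j ∈ Finset.range (2*N+1), (1 + (j:ℝ)) ^ (-(1:ℝ)/2) := by
        have hinj : Set.InjOn k (Finset.range (N+1)) := by
          intro a _ b _ hab
          simp only [hk] at hab
          by_cases ha : a ≤ m <;> by_cases hb : b ≤ m <;> simp [ha, hb] at hab <;> omega
        have himg : ∑ T ∈ Finset.range (N+1), (1 + (k T:ℝ)) ^ (-(1:ℝ)/2)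
            = ∑ j ∈ (Finset.range (N+1)).image k, (1 + (j:ℝ)) ^ (-(1:ℝ)/2) := by
          rw [Finset.sum_image (fun a ha b hb h => hinj ha hb h)]
        rw [himg]
        refine mul_le_mul_of_nonneg_left ?_ (Real.sqrt_nonneg 2)
        refine Finset.sum_le_sum_of_subset_of_nonneg ?_ (fun j _ _ => by positivity)
        intro j hj
        simp only [Finset.mem_image, Finset.mem_range] at hj ⊢
        obtain ⟨T, hT, rfl⟩ := hj
        simp only [hk]
        split <;> omega
    _ ≤ Real.sqrt 2 * (2 * Real.sqrt (2*(N:ℝ)+1)) := by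
        refine mul_le_mul_of_nonneg_left ?_ (Real.sqrt_nonneg 2)
        have h := aux_sumInvSqrt (2*N+1)
        have hc : ((2*N+1:ℕ):ℝ) = 2*(N:ℝ)+1 := by push_cast; ring
        rw [hc] at h
        exact h
    _ ≤ 3 * Real.sqrt (2*(N:ℝ)+1) := by
        have h8 : Real.sqrt 2 * 2 ≤ 3 := by
          nlinarith [Real.sq_sqrt (by norm_num : (0:ℝ) ≤ 2), Real.sqrt_nonneg 2]
        have h9 : (0:ℝ) ≤ Real.sqrt (2*(N:ℝ)+1) := Real.sqrt_nonneg _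
        nlinarith

lemma aux_prodInvSqrt {x y m : ℝ} (hm : 0 < m) (hx : m ≤ x) (hy : m ≤ y) :
    x ^ (-(1:ℝ)/2) * y ^ (-(1:ℝ)/2) ≤ 1/m := by
  have h1 : x ^ (-(1:ℝ)/2) ≤ m ^ (-(1:ℝ)/2) :=
    Real.rpow_le_rpow_of_nonpos hm hx (by norm_num)
  have h2 : y ^ (-(1:ℝ)/2) ≤ m ^ (-(1:ℝ)/2) :=
    Real.rpow_le_rpow_of_nonpos hm hy (by norm_num)
  have h3 : m ^ (-(1:ℝ)/2) * m ^ (-(1:ℝ)/2) = 1/m := by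
    rw [← Real.rpow_add hm]
    norm_num [Real.rpow_neg_one]
  calc x ^ (-(1:ℝ)/2) * y ^ (-(1:ℝ)/2)
      ≤ m ^ (-(1:ℝ)/2) * m ^ (-(1:ℝ)/2) :=
        mul_le_mul h1 h2 (Real.rpow_nonneg (hm.le.trans hy) _) (Real.rpow_nonneg hm.le _)
    _ = 1/m := h3


set_option maxHeartbeats 1000000 in
/-- (Spectral sum bound via Weyl's law.) Suppose `(r_ℓ)` is a sequence of
reals with `r_ℓ ≥ 1` and `#{ℓ : T-1 < r_ℓ ≤ T} ≤ C T` for every integer `T ≥ 1`. Then for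
every `0 < ε < 1/2` there is `C' > 0`, depending only on `C` and `ε`, such that for all
`R ≥ 1` the series `Σ_ℓ r_ℓ^{-5/2+ε} (2R+r_ℓ)^{-1/2} (1+|2R-r_ℓ|)^{-1/2}` converges and
is at most `C'/R`. -/
theorem stmt9 (C : ℝ) (hC : 0 < C) (ε : ℝ) (hε0 : 0 < ε) (hε : ε < 1/2) :
    ∃ C' : ℝ, 0 < C' ∧ ∀ r : ℕ → ℝ, (∀ l : ℕ, 1 ≤ r l) →
      (∀ T : ℕ, 1 ≤ T →
        {l : ℕ | (T : ℝ) - 1 < r l ∧ r l ≤ (T : ℝ)}.Finite ∧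
        (Nat.card {l : ℕ | (T : ℝ) - 1 < r l ∧ r l ≤ (T : ℝ)} : ℝ) ≤ C * T) →
      ∀ R : ℝ, 1 ≤ R →
        Summable (fun l : ℕ =>
          r l ^ (-(5:ℝ)/2 + ε) * (2*R + r l) ^ (-(1:ℝ)/2) *
            (1 + |2*R - r l|) ^ (-(1:ℝ)/2)) ∧
        (∑' l : ℕ,
          r l ^ (-(5:ℝ)/2 + ε) * (2*R + r l) ^ (-(1:ℝ)/2) *
            (1 + |2*R - r l|) ^ (-(1:ℝ)/2)) ≤ C' / R := by
  have hplt : (-(3:ℝ)/2 + ε) < -1 := by linarith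
  have hZsum : Summable (fun T : ℕ => (T:ℝ) ^ (-(3:ℝ)/2 + ε)) := Real.summable_nat_rpow.2 hplt
  set Z : ℝ := ∑' T : ℕ, (T:ℝ) ^ (-(3:ℝ)/2 + ε) with hZdef
  have hZ0 : 0 ≤ Z := tsum_nonneg fun T => Real.rpow_nonneg (Nat.cast_nonneg T) _
  refine ⟨16*C*(Z+9)+1, by positivity, ?_⟩
  intro r hr hcount R hR
  have hR0 : (0:ℝ) < R := by linarith
  have hrl0 : ∀ l, (0:ℝ) < r l := fun l => lt_of_lt_of_le zero_lt_one (hr l)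
  set f : ℕ → ℝ := fun l =>
    r l ^ (-(5:ℝ)/2 + ε) * (2*R + r l) ^ (-(1:ℝ)/2) * (1 + |2*R - r l|) ^ (-(1:ℝ)/2)
    with hfdef
  have hf0 : ∀ l, 0 ≤ f l := fun l =>
    mul_nonneg (mul_nonneg (Real.rpow_nonneg (hrl0 l).le _)
      (Real.rpow_nonneg (by linarith [hrl0 l]) _)) (Real.rpow_nonneg (by positivity) _)
  set φ : ℕ → ℕ := fun l => ⌈r l⌉₊ with hφdef
  set G : ℕ → ℝ := fun T =>
    ((T:ℝ)/2) ^ (-(5:ℝ)/2 + ε) * (2*R + (T:ℝ)/2) ^ (-(1:ℝ)/2) *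
      ((1 + |2*R - (T:ℝ)|)/2) ^ (-(1:ℝ)/2) with hGdef
  have hG0 : ∀ T, 0 ≤ G T := fun T =>
    mul_nonneg (mul_nonneg (Real.rpow_nonneg (by positivity) _)
      (Real.rpow_nonneg (by positivity) _)) (Real.rpow_nonneg (by positivity) _)
  -- pointwise bound f l ≤ G (φ l)
  have hfG : ∀ l, f l ≤ G (φ l) := by
    intro l
    set T : ℕ := φ l with hTdef
    have hT1 : 1 ≤ T := Nat.one_le_ceil_iff.2 (hrl0 l)
    have hT1' : (1:ℝ) ≤ (T:ℝ) := by exact_mod_cast hT1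
    have hle : r l ≤ (T:ℝ) := Nat.le_ceil _
    have hgt : (T:ℝ) < r l + 1 := Nat.ceil_lt_add_one (hrl0 l).le
    have hhalf : (T:ℝ)/2 ≤ r l := by
      rcases le_or_gt (T:ℝ) 2 with h | h
      · linarith [hr l]
      · linarith
    have hTpos : (0:ℝ) < (T:ℝ)/2 := by linarith
    have b1 : r l ^ (-(5:ℝ)/2 + ε) ≤ ((T:ℝ)/2) ^ (-(5:ℝ)/2 + ε) :=
      Real.rpow_le_rpow_of_nonpos hTpos hhalf (by linarith)
    have b2 : (2*R + r l) ^ (-(1:ℝ)/2) ≤ (2*R + (T:ℝ)/2) ^ (-(1:ℝ)/2) :=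
      Real.rpow_le_rpow_of_nonpos (by linarith) (by linarith) (by norm_num)
    have habs1 : |r l - (T:ℝ)| ≤ 1 := abs_le.2 ⟨by linarith, by linarith⟩
    have habs : |2*R - (T:ℝ)| ≤ |2*R - r l| + 1 :=
      le_trans (abs_sub_le (2*R) (r l) (T:ℝ)) (by linarith)
    have b3 : (1 + |2*R - r l|) ^ (-(1:ℝ)/2) ≤ ((1 + |2*R - (T:ℝ)|)/2) ^ (-(1:ℝ)/2) := by
      refine Real.rpow_le_rpow_of_nonpos (by positivity) ?_ (by norm_num)
      have := abs_nonneg (2*R - r l)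
      linarith
    calc f l = r l ^ (-(5:ℝ)/2 + ε) * (2*R + r l) ^ (-(1:ℝ)/2) *
          (1 + |2*R - r l|) ^ (-(1:ℝ)/2) := rfl
      _ ≤ ((T:ℝ)/2) ^ (-(5:ℝ)/2 + ε) * (2*R + (T:ℝ)/2) ^ (-(1:ℝ)/2) *
          ((1 + |2*R - (T:ℝ)|)/2) ^ (-(1:ℝ)/2) := by
          refine mul_le_mul ?_ b3 (Real.rpow_nonneg (by positivity) _) ?_
          · exact mul_le_mul b1 b2 (Real.rpow_nonneg (by linarith [hrl0 l]) _)
              (Real.rpow_nonneg hTpos.le _)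
          · exact mul_nonneg (Real.rpow_nonneg hTpos.le _) (Real.rpow_nonneg (by linarith) _)
      _ = G T := rfl
  -- fibers
  have hfiber : ∀ T : ℕ, 1 ≤ T →
      {l : ℕ | φ l = T} = {l : ℕ | (T:ℝ) - 1 < r l ∧ r l ≤ (T:ℝ)} := by
    intro T hT1
    ext l
    simp only [Set.mem_setOf_eq, hφdef]
    rw [Nat.ceil_eq_iff (by omega), Nat.cast_sub hT1, Nat.cast_one]
  -- ENNReal version
  set F : ℕ → ℝ≥0∞ := fun l => ENNReal.ofReal (f l) with hFdef
  have hsig : ∑' l, F l = ∑' T : ℕ, ∑' l : {l // φ l = T}, F ↑l := by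
    rw [← (Equiv.sigmaFiberEquiv φ).tsum_eq F, ENNReal.tsum_sigma']
    rfl
  have hinner : ∀ T : ℕ,
      (∑' l : {l // φ l = T}, F ↑l) ≤ ENNReal.ofReal (C * T * G T) := by
    intro T
    rcases Nat.eq_zero_or_pos T with rfl | hT1
    · haveI : IsEmpty {l // φ l = 0} := by
        refine ⟨fun ⟨l, hl⟩ => ?_⟩
        have : r l ≤ 0 := Nat.ceil_eq_zero.mp hl
        linarith [hrl0 l]
      rw [tsum_empty]
      exact zero_le
    · obtain ⟨hfin, hcard⟩ := hcount T hT1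
      have hfin' : {l : ℕ | φ l = T}.Finite := by rw [hfiber T hT1]; exact hfin
      have hcard' : (Nat.card {l : ℕ | φ l = T} : ℝ) ≤ C * T := by
        rw [hfiber T hT1]; exact hcard
      haveI : Fintype {l : ℕ | φ l = T} := hfin'.fintype
      haveI : Fintype {l : ℕ // φ l = T} := hfin'.fintype
      rw [tsum_fintype]
      calc ∑ l : {l // φ l = T}, F ↑l
          ≤ ∑ _l : {l // φ l = T}, ENNReal.ofReal (G T) := by
            refine Finset.sum_le_sum fun l _ => ?_
            have hφl : φ (↑l : ℕ) = T := l.2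
            have h := hfG (↑l : ℕ)
            rw [hφl] at h
            exact ENNReal.ofReal_le_ofReal h
        _ = (Fintype.card {l // φ l = T} : ℝ≥0∞) * ENNReal.ofReal (G T) := by
            rw [Finset.sum_const, Finset.card_univ, nsmul_eq_mul]
        _ ≤ ENNReal.ofReal (C * T) * ENNReal.ofReal (G T) := by
            refine mul_le_mul_left ?_ _
            rw [← ENNReal.ofReal_natCast]
            refine ENNReal.ofReal_le_ofReal ?_
            rw [← Nat.card_eq_fintype_card]
            exact hcard'
        _ = ENNReal.ofReal (C * T * G T) := by
            rw [← ENNReal.ofReal_mul (by positivity)]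
  have hbound1 : ∑' l, F l ≤ ∑' T : ℕ, ENNReal.ofReal (C * T * G T) := by
    rw [hsig]; exact ENNReal.tsum_le_tsum hinner
  -- dominating sequences
  set N : ℕ := ⌊4*R⌋₊ with hNdef
  set a : ℕ → ℝ := fun T => (T:ℝ) ^ (-(3:ℝ)/2 + ε) / R with hadef
  set b : ℕ → ℝ := fun T =>
    if (T:ℝ) ≤ 4*R then (1 + |2*R - (T:ℝ)|) ^ (-(1:ℝ)/2) / R ^ ((3:ℝ)/2) else 0 with hbdef
  have ha0 : ∀ T, 0 ≤ a T := fun T => div_nonneg (Real.rpow_nonneg (Nat.cast_nonneg T) _) hR0.le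
  have hb0 : ∀ T, 0 ≤ b T := by
    intro T
    simp only [hbdef]
    split
    · exact div_nonneg (Real.rpow_nonneg (by positivity) _) (Real.rpow_nonneg hR0.le _)
    · exact le_refl 0
  have hb_support : ∀ T ∉ Finset.range (N+1), b T = 0 := by
    intro T hT
    have hTN : N < T := by simpa [Finset.mem_range, Nat.lt_succ_iff, not_le] using hT
    have h4R : 4*R < (T:ℝ) := by
      rw [hNdef] at hTN
      exact (Nat.floor_lt (by positivity)).1 hTN
    simp only [hbdef, if_neg (not_le.2 h4R)]
  have hsa : Summable a := hZsum.div_const R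
  have hsb : Summable b := summable_of_ne_finset_zero hb_support
  -- key pointwise estimate on the bucket bounds
  have hcg : ∀ T : ℕ, C * T * G T ≤ 16*C*(a T + b T) := by
    intro T
    rcases Nat.eq_zero_or_pos T with rfl | hT1
    · have : C * (0:ℕ) * G 0 = 0 := by norm_num
      rw [this]
      have := ha0 0; have := hb0 0
      positivity
    · have hT1' : (1:ℝ) ≤ (T:ℝ) := by exact_mod_cast hT1
      have hTpos : (0:ℝ) < (T:ℝ) := by linarith
      set u : ℝ := (2*R + (T:ℝ)/2) ^ (-(1:ℝ)/2) with hudef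
      set w : ℝ := (1 + |2*R - (T:ℝ)|) ^ (-(1:ℝ)/2) with hwdef
      have hu0 : 0 ≤ u := Real.rpow_nonneg (by positivity) _
      have hw0 : 0 ≤ w := Real.rpow_nonneg (by positivity) _
      have h23 : (2:ℝ) ^ (3:ℝ) = 8 := by
        rw [show (3:ℝ) = ((3:ℕ):ℝ) by norm_num, Real.rpow_natCast]; norm_num
      have h81 : ((T:ℝ)/2) ^ (-(5:ℝ)/2 + ε) ≤ 8 * (T:ℝ) ^ (-(5:ℝ)/2 + ε) := by
        rw [Real.div_rpow (Nat.cast_nonneg T) (by norm_num), div_eq_mul_inv,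
          ← Real.rpow_neg (by norm_num : (0:ℝ) ≤ 2)]
        have : (2:ℝ) ^ (-(-(5:ℝ)/2 + ε)) ≤ 8 := by
          rw [← h23]
          exact Real.rpow_le_rpow_of_exponent_le one_le_two (by linarith)
        rw [mul_comm]
        exact mul_le_mul_of_nonneg_right this (Real.rpow_nonneg (Nat.cast_nonneg T) _)
      have h82 : ((1 + |2*R - (T:ℝ)|)/2) ^ (-(1:ℝ)/2) ≤ 2 * w := by
        rw [Real.div_rpow (by positivity) (by norm_num), div_eq_mul_inv,
          ← Real.rpow_neg (by norm_num : (0:ℝ) ≤ 2)]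
        have h2half : (2:ℝ) ^ (-(-(1:ℝ)/2)) ≤ 2 := by
          rw [show (-(-(1:ℝ)/2)) = (1/2:ℝ) by norm_num, ← Real.sqrt_eq_rpow]
          nlinarith [Real.sq_sqrt (by norm_num : (0:ℝ) ≤ 2), Real.sqrt_nonneg 2]
        rw [mul_comm]
        exact mul_le_mul_of_nonneg_right h2half hw0
      have hTA : (T:ℝ) * (T:ℝ) ^ (-(5:ℝ)/2 + ε) = (T:ℝ) ^ (-(3:ℝ)/2 + ε) := by
        nth_rewrite 1 [← Real.rpow_one (T:ℝ)]
        rw [← Real.rpow_add hTpos]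
        congr 1; ring
      have hG16 : C * T * G T ≤ 16*C*((T:ℝ) ^ (-(3:ℝ)/2 + ε) * (u * w)) := by
        calc C * T * G T
            = (C*(T:ℝ)) * ((((T:ℝ)/2) ^ (-(5:ℝ)/2 + ε) * u) *
                ((1 + |2*R - (T:ℝ)|)/2) ^ (-(1:ℝ)/2)) := by rw [hGdef]; try ring
          _ ≤ (C*(T:ℝ)) * (((8 * (T:ℝ) ^ (-(5:ℝ)/2 + ε)) * u) * (2*w)) := by
              refine mul_le_mul_of_nonneg_left ?_ (by positivity)
              refine mul_le_mul (mul_le_mul_of_nonneg_right h81 hu0) h82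
                (Real.rpow_nonneg (by positivity) _) (by positivity)
          _ = 16*C*(((T:ℝ) * (T:ℝ) ^ (-(5:ℝ)/2 + ε)) * (u * w)) := by ring
          _ = 16*C*((T:ℝ) ^ (-(3:ℝ)/2 + ε) * (u * w)) := by rw [hTA]
      have hTp0 : 0 ≤ (T:ℝ) ^ (-(3:ℝ)/2 + ε) := Real.rpow_nonneg hTpos.le _
      have hstep : (T:ℝ) ^ (-(3:ℝ)/2 + ε) * (u * w) ≤ a T + b T := by
        rcases le_or_gt (T:ℝ) R with hTR | hTR
        · -- small T
          have huw : u * w ≤ 1/R := by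
            refine aux_prodInvSqrt hR0 (by linarith) ?_
            have h1 : 2*R - (T:ℝ) ≤ |2*R - (T:ℝ)| := le_abs_self _
            linarith
          have : (T:ℝ) ^ (-(3:ℝ)/2 + ε) * (u * w) ≤ a T := by
            rw [hadef]
            calc (T:ℝ) ^ (-(3:ℝ)/2 + ε) * (u * w)
                ≤ (T:ℝ) ^ (-(3:ℝ)/2 + ε) * (1/R) := mul_le_mul_of_nonneg_left huw hTp0
              _ = (T:ℝ) ^ (-(3:ℝ)/2 + ε) / R := by ring
          linarith [hb0 T]
        · rcases le_or_gt (T:ℝ) (4*R) with hT4 | hT4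
          · -- middle range
            have hbT : b T = w / R ^ ((3:ℝ)/2) := by rw [hbdef]; simp only [if_pos hT4]; rfl
            have hTple : (T:ℝ) ^ (-(3:ℝ)/2 + ε) ≤ R ^ (-(3:ℝ)/2 + ε) :=
              Real.rpow_le_rpow_of_nonpos hR0 hTR.le (by linarith)
            have hule : u ≤ R ^ (-(1:ℝ)/2) :=
              Real.rpow_le_rpow_of_nonpos hR0 (by linarith) (by norm_num)
            have hRp : R ^ (-(3:ℝ)/2 + ε) * R ^ (-(1:ℝ)/2) ≤ (R ^ ((3:ℝ)/2))⁻¹ := by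
              rw [← Real.rpow_add hR0, ← Real.rpow_neg hR0.le]
              exact Real.rpow_le_rpow_of_exponent_le hR (by linarith)
            calc (T:ℝ) ^ (-(3:ℝ)/2 + ε) * (u * w)
                = ((T:ℝ) ^ (-(3:ℝ)/2 + ε) * u) * w := by ring
              _ ≤ (R ^ (-(3:ℝ)/2 + ε) * R ^ (-(1:ℝ)/2)) * w := by
                  refine mul_le_mul_of_nonneg_right ?_ hw0
                  exact mul_le_mul hTple hule hu0 (Real.rpow_nonneg hR0.le _)
              _ ≤ (R ^ ((3:ℝ)/2))⁻¹ * w := mul_le_mul_of_nonneg_right hRp hw0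
              _ = b T := by rw [hbT]; ring
              _ ≤ a T + b T := le_add_of_nonneg_left (ha0 T)
          · -- large T
            have hThalf : (0:ℝ) < (T:ℝ)/2 := by linarith
            have huw : u * w ≤ 1/((T:ℝ)/2) := by
              refine aux_prodInvSqrt hThalf (by linarith) ?_
              have h1 : -(2*R - (T:ℝ)) ≤ |2*R - (T:ℝ)| := neg_le_abs _
              linarith
            have huw' : u * w ≤ 1/R := by
              refine le_trans huw ?_
              rw [div_le_div_iff₀ hThalf hR0]
              linarith
            have : (T:ℝ) ^ (-(3:ℝ)/2 + ε) * (u * w) ≤ a T := by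
              rw [hadef]
              calc (T:ℝ) ^ (-(3:ℝ)/2 + ε) * (u * w)
                  ≤ (T:ℝ) ^ (-(3:ℝ)/2 + ε) * (1/R) := mul_le_mul_of_nonneg_left huw' hTp0
                _ = (T:ℝ) ^ (-(3:ℝ)/2 + ε) / R := by ring
            linarith [hb0 T]
      calc C * T * G T ≤ 16*C*((T:ℝ) ^ (-(3:ℝ)/2 + ε) * (u * w)) := hG16
        _ ≤ 16*C*(a T + b T) := mul_le_mul_of_nonneg_left hstep (by positivity)
  have hcg0 : ∀ T : ℕ, 0 ≤ C * T * G T := fun T =>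
    mul_nonneg (mul_nonneg hC.le (Nat.cast_nonneg T)) (hG0 T)
  have hsH : Summable (fun T : ℕ => C * T * G T) :=
    Summable.of_nonneg_of_le hcg0 hcg ((hsa.add hsb).mul_left (16*C))
  -- bound the b-sum
  have hb9 : ∑' T, b T ≤ 9 / R := by
    rw [tsum_eq_sum hb_support]
    have hfloor2 : ⌊2*R⌋₊ ≤ N := by
      rw [hNdef]
      exact Nat.floor_le_floor (by linarith)
    have hwin := aux_windowSum (2*R) (by positivity) N hfloor2
    have hN4R : (N:ℝ) ≤ 4*R := Nat.floor_le (by positivity)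
    have hsqrt : Real.sqrt (2*(N:ℝ)+1) ≤ 3 * Real.sqrt R := by
      have h9 : 2*(N:ℝ)+1 ≤ 9*R := by linarith
      calc Real.sqrt (2*(N:ℝ)+1) ≤ Real.sqrt (9*R) := Real.sqrt_le_sqrt h9
        _ = 3 * Real.sqrt R := by
            rw [show (9:ℝ)*R = 3^2*R by norm_num, Real.sqrt_mul (by positivity),
              Real.sqrt_sq (by norm_num)]
    have hsum1 : ∑ T ∈ Finset.range (N+1), b T
        ≤ (∑ T ∈ Finset.range (N+1), (1 + |2*R - (T:ℝ)|) ^ (-(1:ℝ)/2)) / R ^ ((3:ℝ)/2) := by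
      rw [Finset.sum_div]
      refine Finset.sum_le_sum fun T _ => ?_
      simp only [hbdef]
      split
      · exact le_refl _
      · positivity
    have hR32 : (0:ℝ) < R ^ ((3:ℝ)/2) := Real.rpow_pos_of_pos hR0 _
    have hfin9 : (3 * Real.sqrt (2*(N:ℝ)+1)) / R ^ ((3:ℝ)/2) ≤ 9 / R := by
      have h1 : (3 : ℝ) * Real.sqrt (2*(N:ℝ)+1) ≤ 9 * Real.sqrt R := by
        nlinarith [Real.sqrt_nonneg R]
      have h2 : (9:ℝ) * Real.sqrt R / R ^ ((3:ℝ)/2) = 9 / R := by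
        rw [Real.sqrt_eq_rpow, mul_div_assoc, ← Real.rpow_sub hR0]
        norm_num
        rw [show (-1:ℝ) = -(1:ℝ) by norm_num, Real.rpow_neg hR0.le, Real.rpow_one]
        ring
      calc (3 * Real.sqrt (2*(N:ℝ)+1)) / R ^ ((3:ℝ)/2)
          ≤ (9 * Real.sqrt R) / R ^ ((3:ℝ)/2) := by
            gcongr
        _ = 9 / R := h2
    calc ∑ T ∈ Finset.range (N+1), b T
        ≤ (∑ T ∈ Finset.range (N+1), (1 + |2*R - (T:ℝ)|) ^ (-(1:ℝ)/2)) / R ^ ((3:ℝ)/2) := hsum1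
      _ ≤ (3 * Real.sqrt (2*(N:ℝ)+1)) / R ^ ((3:ℝ)/2) := by gcongr
      _ ≤ 9 / R := hfin9
  have ha_sum : ∑' T, a T = Z / R := by
    rw [hadef, hZdef]
    exact tsum_div_const
  have h7 : ∑' T : ℕ, C * T * G T ≤ 16*C*(Z+9)/R := by
    calc ∑' T : ℕ, C * T * G T
        ≤ ∑' T : ℕ, 16*C*(a T + b T) :=
          Summable.tsum_le_tsum hcg hsH ((hsa.add hsb).mul_left (16*C))
      _ = 16*C*(∑' T : ℕ, (a T + b T)) := tsum_mul_left
      _ = 16*C*((∑' T, a T) + ∑' T, b T) := by rw [Summable.tsum_add hsa hsb]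
      _ ≤ 16*C*(Z/R + 9/R) := by
          rw [ha_sum]
          refine mul_le_mul_of_nonneg_left ?_ (by positivity)
          linarith [hb9]
      _ = 16*C*(Z+9)/R := by ring
  have hfinal : ∑' l, F l ≤ ENNReal.ofReal (16*C*(Z+9)/R) := by
    refine hbound1.trans ?_
    rw [← ENNReal.ofReal_tsum_of_nonneg hcg0 hsH]
    exact ENNReal.ofReal_le_ofReal h7
  have hne : ∑' l, F l ≠ ⊤ := (lt_of_le_of_lt hfinal ENNReal.ofReal_lt_top).ne
  have hsumf : Summable f := by
    have h := ENNReal.summable_toReal hne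
    refine h.congr fun l => ?_
    exact ENNReal.toReal_ofReal (hf0 l)
  refine ⟨hsumf, ?_⟩
  have heq : ∑' l, f l = (∑' l, F l).toReal := by
    rw [ENNReal.tsum_toReal_eq (fun l => ENNReal.ofReal_ne_top)]
    exact tsum_congr fun l => (ENNReal.toReal_ofReal (hf0 l)).symm
  have : ∑' l, f l ≤ 16*C*(Z+9)/R := by
    rw [heq]
    calc (∑' l, F l).toReal ≤ (ENNReal.ofReal (16*C*(Z+9)/R)).toReal :=
        ENNReal.toReal_mono ENNReal.ofReal_ne_top hfinal
      _ = 16*C*(Z+9)/R := ENNReal.toReal_ofReal (by positivity)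
  refine le_trans this ?_
  rw [div_le_div_iff₀ hR0 hR0]
  nlinarith
end

section
/- For every ε with 0 < ε < 1/2 there exists a constant C > 0 such that for all real R ≥ 1: ∫_ℝ (1+|t|)^{−5/2+ε} · (2R+|t|)^{−1/2} · (1 + |2R − |t||)^{−1/2} dt ≤ C/R. -/
open MeasureTheory Real

lemma rpow_neg_half_anti {a b : ℝ} (ha : 0 < a) (hab : a ≤ b) :
    b ^ (-(1:ℝ)/2) ≤ a ^ (-(1:ℝ)/2) := by
  have hb : 0 < b := lt_of_lt_of_le ha hab
  rw [show -(1:ℝ)/2 = -(1/2) by ring, Real.rpow_neg ha.le, Real.rpow_neg hb.le]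
  exact inv_anti₀ (Real.rpow_pos_of_pos ha _)
    (Real.rpow_le_rpow ha.le hab (by norm_num))

/-- (Archimedean integral bound.) For every `0 < ε < 1/2` there is `C > 0`
such that for all `R ≥ 1`,
`∫_ℝ (1+|t|)^{-5/2+ε} (2R+|t|)^{-1/2} (1+|2R-|t||)^{-1/2} dt ≤ C/R`. -/
theorem stmt10 (ε : ℝ) (hε0 : 0 < ε) (hε : ε < 1/2) :
    ∃ C : ℝ, 0 < C ∧ ∀ R : ℝ, 1 ≤ R →
      Integrable (fun t : ℝ =>
        (1 + |t|) ^ (-(5:ℝ)/2 + ε) * (2*R + |t|) ^ (-(1:ℝ)/2) *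
          (1 + abs (2*R - |t|)) ^ (-(1:ℝ)/2)) ∧
      (∫ t : ℝ,
        (1 + |t|) ^ (-(5:ℝ)/2 + ε) * (2*R + |t|) ^ (-(1:ℝ)/2) *
          (1 + abs (2*R - |t|)) ^ (-(1:ℝ)/2)) ≤ C / R := by
  have hg : Integrable (fun t : ℝ => (1 + |t|) ^ (-(3:ℝ)/2 + ε)) := by
    have h32 : (Module.finrank ℝ ℝ : ℝ) < 3/2 - ε := by
      simp [Module.finrank_self]; linarith
    have := integrable_one_add_norm (E := ℝ) (μ := volume) h32
    simpa [Real.norm_eq_abs, show -(3/2 - ε) = -(3:ℝ)/2 + ε by ring] using this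
  set I : ℝ := ∫ t : ℝ, (1 + |t|) ^ (-(3:ℝ)/2 + ε) with hI
  have hInonneg : 0 ≤ I :=
    integral_nonneg fun t => Real.rpow_nonneg (by positivity) _
  refine ⟨I + 1, by linarith, fun R hR => ?_⟩
  have hRpos : (0:ℝ) < R := by linarith
  -- pointwise bound
  have hbound : ∀ t : ℝ,
      (1 + |t|) ^ (-(5:ℝ)/2 + ε) * (2*R + |t|) ^ (-(1:ℝ)/2) *
        (1 + abs (2*R - |t|)) ^ (-(1:ℝ)/2)
      ≤ R⁻¹ * (1 + |t|) ^ (-(3:ℝ)/2 + ε) := by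
    intro t
    have h1t : (0:ℝ) < 1 + |t| := by positivity
    have h2R : (0:ℝ) < 2*R + |t| := by positivity
    have habs : (0:ℝ) < 1 + (abs (2*R - |t|)) := by positivity
    rcases le_or_gt (|t|) R with hcase | hcase
    · -- |t| ≤ R : the two last factors give R⁻¹
      have hA : (1 + |t|) ^ (-(5:ℝ)/2 + ε) ≤ (1 + |t|) ^ (-(3:ℝ)/2 + ε) :=
        Real.rpow_le_rpow_of_exponent_le (by linarith [abs_nonneg t]) (by linarith)
      have hB : (2*R + |t|) ^ (-(1:ℝ)/2) ≤ R ^ (-(1:ℝ)/2) :=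
        rpow_neg_half_anti hRpos (by linarith [abs_nonneg t])
      have habs2 : R ≤ 1 + (abs (2*R - |t|)) := by
        have : R ≤ (abs (2*R - |t|)) := le_trans (by linarith) (le_abs_self _)
        linarith
      have hC : (1 + (abs (2*R - |t|))) ^ (-(1:ℝ)/2) ≤ R ^ (-(1:ℝ)/2) :=
        rpow_neg_half_anti hRpos habs2
      have hRR : R ^ (-(1:ℝ)/2) * R ^ (-(1:ℝ)/2) = R⁻¹ := by
        rw [← Real.rpow_add hRpos]
        norm_num [Real.rpow_neg_one]
      calc (1 + |t|) ^ (-(5:ℝ)/2 + ε) * (2*R + |t|) ^ (-(1:ℝ)/2) *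
            (1 + (abs (2*R - |t|))) ^ (-(1:ℝ)/2)
          ≤ (1 + |t|) ^ (-(3:ℝ)/2 + ε) * (R ^ (-(1:ℝ)/2) * R ^ (-(1:ℝ)/2)) := by
            rw [mul_assoc]
            exact mul_le_mul hA (mul_le_mul hB hC (Real.rpow_nonneg habs.le _)
              (Real.rpow_nonneg hRpos.le _)) (by positivity) (Real.rpow_nonneg h1t.le _)
        _ = R⁻¹ * (1 + |t|) ^ (-(3:ℝ)/2 + ε) := by rw [hRR, mul_comm]
    · -- R < |t| : first factor gives R⁻¹ extra
      have hsplit : (1 + |t|) ^ (-(5:ℝ)/2 + ε)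
          = (1 + |t|) ^ (-(1:ℝ)) * (1 + |t|) ^ (-(3:ℝ)/2 + ε) := by
        rw [← Real.rpow_add h1t]; ring_nf
      have hA : (1 + |t|) ^ (-(1:ℝ)) ≤ R⁻¹ := by
        rw [Real.rpow_neg_one]
        exact inv_anti₀ hRpos (by linarith)
      have hB : (2*R + |t|) ^ (-(1:ℝ)/2) ≤ 1 :=
        Real.rpow_le_one_of_one_le_of_nonpos (by linarith) (by norm_num)
      have hC : (1 + (abs (2*R - |t|))) ^ (-(1:ℝ)/2) ≤ 1 :=
        Real.rpow_le_one_of_one_le_of_nonpos (by linarith [abs_nonneg (2*R - |t|)])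
          (by norm_num)
      calc (1 + |t|) ^ (-(5:ℝ)/2 + ε) * (2*R + |t|) ^ (-(1:ℝ)/2) *
            (1 + (abs (2*R - |t|))) ^ (-(1:ℝ)/2)
          ≤ (1 + |t|) ^ (-(5:ℝ)/2 + ε) * 1 * 1 := by
            apply mul_le_mul _ hC (Real.rpow_nonneg habs.le _)
            · positivity
            · exact mul_le_mul_of_nonneg_left hB (Real.rpow_nonneg h1t.le _)
        _ = (1 + |t|) ^ (-(1:ℝ)) * (1 + |t|) ^ (-(3:ℝ)/2 + ε) := by
            rw [mul_one, mul_one, hsplit]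
        _ ≤ R⁻¹ * (1 + |t|) ^ (-(3:ℝ)/2 + ε) :=
            mul_le_mul_of_nonneg_right hA (Real.rpow_nonneg h1t.le _)
  have hmeas : AEStronglyMeasurable (fun t : ℝ =>
      (1 + |t|) ^ (-(5:ℝ)/2 + ε) * (2*R + |t|) ^ (-(1:ℝ)/2) *
        (1 + abs (2*R - |t|)) ^ (-(1:ℝ)/2)) volume := by
    apply Continuous.aestronglyMeasurable
    apply Continuous.mul
    apply Continuous.mul
    · exact (continuous_const.add continuous_abs).rpow_const
        (fun t => Or.inl (by positivity : (0:ℝ) < 1 + |t|).ne')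
    · exact (continuous_const.add continuous_abs).rpow_const
        (fun t => Or.inl (by positivity : (0:ℝ) < 2*R + |t|).ne')
    · exact (continuous_const.add ((continuous_const.sub continuous_abs).abs)).rpow_const
        (fun t => Or.inl (by positivity : (0:ℝ) < 1 + abs (2*R - |t|)).ne')
  have hInt : Integrable (fun t : ℝ =>
      (1 + |t|) ^ (-(5:ℝ)/2 + ε) * (2*R + |t|) ^ (-(1:ℝ)/2) *
        (1 + abs (2*R - |t|)) ^ (-(1:ℝ)/2)) := by
    refine (hg.const_mul R⁻¹).mono' hmeas (Filter.Eventually.of_forall fun t => ?_)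
    rw [Real.norm_eq_abs, abs_of_nonneg (by positivity)]
    exact hbound t
  refine ⟨hInt, ?_⟩
  have h1 : (∫ t : ℝ,
      (1 + |t|) ^ (-(5:ℝ)/2 + ε) * (2*R + |t|) ^ (-(1:ℝ)/2) *
        (1 + abs (2*R - |t|)) ^ (-(1:ℝ)/2))
      ≤ ∫ t : ℝ, R⁻¹ * (1 + |t|) ^ (-(3:ℝ)/2 + ε) :=
    integral_mono hInt (hg.const_mul R⁻¹) hbound
  have h2 : (∫ t : ℝ, R⁻¹ * (1 + |t|) ^ (-(3:ℝ)/2 + ε)) = R⁻¹ * I := by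
    rw [integral_const_mul]
  calc _ ≤ R⁻¹ * I := by rw [← h2]; exact h1
    _ ≤ (I + 1) / R := by
        rw [div_eq_inv_mul]
        exact mul_le_mul_of_nonneg_left (by linarith) (by positivity)
end

section
/- Let λ : ℕ₊ → ℂ satisfy the Hecke relations, and suppose there exist A > 0 and θ ≥ 0 with |λ(n)| ≤ A·n^θ for all n ≥ 1. Then for every t ∈ ℝ and every s ∈ ℂ with Re(s) > 1 + θ, the series Σ_{n≥1} n^{−2s}, Σ_{n≥1} λ(n)·λ(n,t)·n^{−s}, Σ_{n≥1} λ(n)·n^{−(s+it)}, and Σ_{n≥1} λ(n)·n^{−(s−it)} all converge absolutely, and (Σ_{n≥1} n^{−2s}) · (Σ_{n≥1} λ(n)·λ(n,t)·n^{−s}) = (Σ_{n≥1} λ(n)·n^{−(s+it)}) · (Σ_{n≥1} λ(n)·n^{−(s−it)}). -/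
open Complex LSeries
open scoped LSeries.notation

/-- `λ(n,t) = Σ_{ab=n} a^{it} b^{-it}`. -/
noncomputable def lamT (n : ℕ) (t : ℝ) : ℂ :=
  ∑ a ∈ n.divisors, ((a : ℂ) ^ (Complex.I * t)) * (((n / a : ℕ) : ℂ) ^ (-(Complex.I * t)))

noncomputable def cSq : ℕ → ℂ := fun n => if n.sqrt * n.sqrt = n then 1 else 0

lemma norm_nat_cpow_eq_one (a : ℕ) (ha : 0 < a) {z : ℂ} (hz : z.re = 0) : ‖(a : ℂ) ^ z‖ = 1 := by
  rw [Complex.norm_natCast_cpow_of_pos ha, hz, Real.rpow_zero]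

lemma I_mul_re (t : ℝ) : (Complex.I * (t : ℂ)).re = 0 := by simp

lemma neg_I_mul_re (t : ℝ) : (-(Complex.I * (t : ℂ))).re = 0 := by simp

lemma lamT_norm_le (n : ℕ) (t : ℝ) : ‖lamT n t‖ ≤ (n.divisors.card : ℝ) := by
  refine (norm_sum_le _ _).trans ?_
  have hb : ∀ a ∈ n.divisors,
      ‖((a : ℂ) ^ (Complex.I * t)) * (((n / a : ℕ) : ℂ) ^ (-(Complex.I * t)))‖ ≤ 1 := by
    intro a ha
    obtain ⟨hdvd, hn⟩ := Nat.mem_divisors.mp ha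
    have ha0 : 0 < a := Nat.pos_of_mem_divisors ha
    have hna : 0 < n / a := Nat.div_pos (Nat.le_of_dvd (Nat.pos_of_ne_zero hn) hdvd) ha0
    rw [norm_mul, norm_nat_cpow_eq_one a ha0 (I_mul_re t),
      norm_nat_cpow_eq_one _ hna (neg_I_mul_re t)]
    norm_num
  calc ∑ a ∈ n.divisors, ‖((a : ℂ) ^ (Complex.I * t)) * (((n / a : ℕ) : ℂ) ^ (-(Complex.I * t)))‖
      ≤ ∑ _a ∈ n.divisors, (1 : ℝ) := Finset.sum_le_sum hb
    _ = (n.divisors.card : ℝ) := by simp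

/-- The uniform majorant function. -/
noncomputable def uMaj (A' θ : ℝ) : ℕ → ℂ := fun n => ((A' * (n : ℝ) ^ θ : ℝ) : ℂ)

lemma uMaj_conv_val (A' θ : ℝ) (n : ℕ) :
    (uMaj A' θ ⍟ uMaj A' θ) n
      = (((n.divisors.card : ℝ) * (A' * A' * (n : ℝ) ^ θ) : ℝ) : ℂ) := by
  rw [LSeries.convolution_def]
  dsimp only
  rw [Nat.sum_divisorsAntidiagonal (f := fun a b => uMaj A' θ a * uMaj A' θ b)]
  calc ∑ a ∈ n.divisors, uMaj A' θ a * uMaj A' θ (n / a)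
      = ∑ _a ∈ n.divisors, (((A' * A' * (n : ℝ) ^ θ : ℝ)) : ℂ) := by
        refine Finset.sum_congr rfl fun a ha => ?_
        obtain ⟨hdvd, -⟩ := Nat.mem_divisors.mp ha
        rw [uMaj, uMaj, ← Complex.ofReal_mul]
        congr 1
        have hx : (a : ℝ) ^ θ * ((n / a : ℕ) : ℝ) ^ θ = (n : ℝ) ^ θ := by
          rw [← Real.mul_rpow (Nat.cast_nonneg a) (Nat.cast_nonneg _)]
          congr 1
          rw [← Nat.cast_mul, Nat.mul_div_cancel' hdvd]
        rw [show A' * (a : ℝ) ^ θ * (A' * ((n / a : ℕ) : ℝ) ^ θ)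
            = A' * A' * ((a : ℝ) ^ θ * ((n / a : ℕ) : ℝ) ^ θ) by ring, hx]
    _ = (((n.divisors.card : ℝ) * (A' * A' * (n : ℝ) ^ θ) : ℝ) : ℂ) := by
        rw [Finset.sum_const, nsmul_eq_mul]
        push_cast
        ring

lemma term_succ (F : ℕ → ℂ) (s : ℂ) (n : ℕ) :
    LSeries.term F s (n + 1) = F (n + 1) * ((n + 1 : ℕ) : ℂ) ^ (-s) := by
  rw [LSeries.term_of_ne_zero (Nat.succ_ne_zero n), Complex.cpow_neg, div_eq_mul_inv]

lemma tsum_shift (G : ℕ → ℂ) (hG : G 0 = 0) : ∑' n : ℕ, G (n + 1) = ∑' n : ℕ, G n := by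
  refine Function.Injective.tsum_eq (g := fun n : ℕ => n + 1)
    (fun a b h => by simpa using h) ?_
  intro x hx
  rcases Nat.eq_zero_or_pos x with rfl | hpos
  · exact absurd hG hx
  · exact ⟨x - 1, by simp; omega⟩

lemma term_gp (f : ℕ → ℂ) (s : ℂ) (t : ℝ) (n : ℕ) :
    LSeries.term (fun k => f k * (k : ℂ) ^ (-(Complex.I * t))) s (n + 1)
      = f (n + 1) * ((n + 1 : ℕ) : ℂ) ^ (-(s + Complex.I * t)) := by
  have hx : ((n + 1 : ℕ) : ℂ) ≠ 0 := Nat.cast_ne_zero.mpr (Nat.succ_ne_zero n)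
  rw [term_succ]
  rw [show -(s + Complex.I * t) = (-s) + (-(Complex.I * t)) by ring,
    Complex.cpow_add _ _ hx]
  ring

lemma term_gm (f : ℕ → ℂ) (s : ℂ) (t : ℝ) (n : ℕ) :
    LSeries.term (fun k => f k * (k : ℂ) ^ (Complex.I * t)) s (n + 1)
      = f (n + 1) * ((n + 1 : ℕ) : ℂ) ^ (-(s - Complex.I * t)) := by
  have hx : ((n + 1 : ℕ) : ℂ) ≠ 0 := Nat.cast_ne_zero.mpr (Nat.succ_ne_zero n)
  rw [term_succ]
  rw [show -(s - Complex.I * t) = (-s) + (Complex.I * t) by ring,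
    Complex.cpow_add _ _ hx]
  ring

lemma lamT_eq_sum_DA (n : ℕ) (t : ℝ) :
    lamT n t = ∑ p ∈ n.divisorsAntidiagonal,
      ((p.1 : ℂ) ^ (Complex.I * t)) * ((p.2 : ℂ) ^ (-(Complex.I * t))) := by
  rw [lamT]
  exact (Nat.sum_divisorsAntidiagonal
    (f := fun a b => ((a : ℂ) ^ (Complex.I * t)) * (((b : ℕ) : ℂ) ^ (-(Complex.I * t))))).symm

lemma key_conv (f : ℕ → ℂ)
    (hHecke : ∀ m n : ℕ, 0 < m → 0 < n →
      f m * f n = ∑ d ∈ (Nat.gcd m n).divisors, f (m * n / d ^ 2)) (t : ℝ) :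
    (cSq ⍟ fun n => f n * lamT n t) =
      ((fun n => f n * (n : ℂ) ^ (-(Complex.I * t))) ⍟
        (fun n => f n * (n : ℂ) ^ (Complex.I * t))) := by
  classical
  funext n
  simp only [LSeries.convolution_def]
  rcases eq_or_ne n 0 with rfl | hn
  · simp
  -- Left side as a sigma sum
  have hL : ∑ p ∈ n.divisorsAntidiagonal, cSq p.1 * (f p.2 * lamT p.2 t)
      = ∑ x ∈ ((n.divisorsAntidiagonal.filter fun p => p.1.sqrt * p.1.sqrt = p.1).sigma
          fun p => p.2.divisorsAntidiagonal),
          f x.1.2 * ((x.2.1 : ℂ) ^ (Complex.I * t) * (x.2.2 : ℂ) ^ (-(Complex.I * t))) := by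
    rw [Finset.sum_sigma]
    rw [show (∑ p ∈ n.divisorsAntidiagonal, cSq p.1 * (f p.2 * lamT p.2 t))
        = ∑ p ∈ n.divisorsAntidiagonal,
            (if p.1.sqrt * p.1.sqrt = p.1 then f p.2 * lamT p.2 t else 0) from
      Finset.sum_congr rfl fun p _ => by
        by_cases hp : p.1.sqrt * p.1.sqrt = p.1 <;> simp [cSq, hp]]
    rw [← Finset.sum_filter]
    refine Finset.sum_congr rfl fun p _ => ?_
    rw [lamT_eq_sum_DA, Finset.mul_sum]
  -- Right side as a sigma sum
  have hR : ∑ p ∈ n.divisorsAntidiagonal,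
        (f p.1 * (p.1 : ℂ) ^ (-(Complex.I * t))) * (f p.2 * (p.2 : ℂ) ^ (Complex.I * t))
      = ∑ y ∈ (n.divisorsAntidiagonal.sigma fun p => (Nat.gcd p.1 p.2).divisors),
          (y.1.1 : ℂ) ^ (-(Complex.I * t)) * (y.1.2 : ℂ) ^ (Complex.I * t)
            * f (y.1.1 * y.1.2 / y.2 ^ 2) := by
    rw [Finset.sum_sigma]
    refine Finset.sum_congr rfl fun p hp => ?_
    obtain ⟨h1, h2⟩ := Nat.ne_zero_of_mem_divisorsAntidiagonal hp
    have hH := hHecke p.1 p.2 (Nat.pos_of_ne_zero h1) (Nat.pos_of_ne_zero h2)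
    calc (f p.1 * (p.1 : ℂ) ^ (-(Complex.I * t))) * (f p.2 * (p.2 : ℂ) ^ (Complex.I * t))
        = (p.1 : ℂ) ^ (-(Complex.I * t)) * (p.2 : ℂ) ^ (Complex.I * t) * (f p.1 * f p.2) := by
          ring
      _ = _ := by rw [hH, Finset.mul_sum]
  rw [hL, hR]
  refine Finset.sum_nbij'
    (i := fun x => ⟨(x.1.1.sqrt * x.2.2, x.1.1.sqrt * x.2.1), x.1.1.sqrt⟩)
    (j := fun y => ⟨(y.2 * y.2, (y.1.1 / y.2) * (y.1.2 / y.2)), (y.1.2 / y.2, y.1.1 / y.2)⟩)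
    ?_ ?_ ?_ ?_ ?_
  · -- hi
    rintro ⟨⟨a, b⟩, u, v⟩ hx
    rw [Finset.mem_sigma, Finset.mem_filter, Nat.mem_divisorsAntidiagonal,
      Nat.mem_divisorsAntidiagonal] at hx
    obtain ⟨⟨⟨hab, -⟩, hsq⟩, huv, hb⟩ := hx
    simp only at hab hsq huv hb ⊢
    set e := a.sqrt with he
    have hprod : (e * v) * (e * u) = n := by
      rw [show (e * v) * (e * u) = (e * e) * (u * v) by ring, hsq, huv, hab]
    rw [Finset.mem_sigma, Nat.mem_divisorsAntidiagonal, Nat.mem_divisors]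
    dsimp only
    refine ⟨⟨hprod, hn⟩, ?_, ?_⟩
    · exact Nat.dvd_gcd (Dvd.intro v rfl) (Dvd.intro u rfl)
    · have hev : e * v ≠ 0 := by
        intro h0
        rw [h0, zero_mul] at hprod
        exact hn hprod.symm
      have : 0 < Nat.gcd (e * v) (e * u) := Nat.gcd_pos_of_pos_left _ (Nat.pos_of_ne_zero hev)
      exact this.ne'
  · -- hj
    rintro ⟨⟨a, b⟩, d⟩ hy
    rw [Finset.mem_sigma, Nat.mem_divisorsAntidiagonal, Nat.mem_divisors] at hy
    obtain ⟨⟨hab, -⟩, hdg, -⟩ := hy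
    simp only at hab hdg ⊢
    have hda : d ∣ a := hdg.trans (Nat.gcd_dvd_left a b)
    have hdb : d ∣ b := hdg.trans (Nat.gcd_dvd_right a b)
    have hprod : (d * d) * ((a / d) * (b / d)) = n := by
      rw [show (d * d) * ((a / d) * (b / d)) = (d * (a / d)) * (d * (b / d)) by ring,
        Nat.mul_div_cancel' hda, Nat.mul_div_cancel' hdb, hab]
    rw [Finset.mem_sigma, Finset.mem_filter, Nat.mem_divisorsAntidiagonal,
      Nat.mem_divisorsAntidiagonal]
    dsimp only
    refine ⟨⟨⟨hprod, hn⟩, ?_⟩, ?_, ?_⟩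
    · rw [Nat.sqrt_eq]
    · exact mul_comm _ _
    · intro h0
      rw [h0, mul_zero] at hprod
      exact hn hprod.symm
  · -- left_inv
    rintro ⟨⟨a, b⟩, u, v⟩ hx
    rw [Finset.mem_sigma, Finset.mem_filter, Nat.mem_divisorsAntidiagonal,
      Nat.mem_divisorsAntidiagonal] at hx
    obtain ⟨⟨⟨hab, -⟩, hsq⟩, huv, hb⟩ := hx
    simp only at hab hsq huv hb ⊢
    have ha : a ≠ 0 := by
      intro h0; rw [h0, zero_mul] at hab; exact hn hab.symm
    have he0 : 0 < a.sqrt := by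
      rcases Nat.eq_zero_or_pos a.sqrt with h0 | h0
      · exfalso; apply ha; rw [← hsq, h0]
      · exact h0
    simp only [Nat.mul_div_cancel_left _ he0, hsq]
    rw [show v * u = u * v by ring, huv]
  · -- right_inv
    rintro ⟨⟨a, b⟩, d⟩ hy
    rw [Finset.mem_sigma, Nat.mem_divisorsAntidiagonal, Nat.mem_divisors] at hy
    obtain ⟨⟨hab, -⟩, hdg, hg0⟩ := hy
    simp only at hab hdg ⊢
    have hda : d ∣ a := hdg.trans (Nat.gcd_dvd_left a b)
    have hdb : d ∣ b := hdg.trans (Nat.gcd_dvd_right a b)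
    simp only [Nat.sqrt_eq, Nat.mul_div_cancel' hda, Nat.mul_div_cancel' hdb]
  · -- terms agree
    rintro ⟨⟨a, b⟩, u, v⟩ hx
    rw [Finset.mem_sigma, Finset.mem_filter, Nat.mem_divisorsAntidiagonal,
      Nat.mem_divisorsAntidiagonal] at hx
    obtain ⟨⟨⟨hab, -⟩, hsq⟩, huv, hb⟩ := hx
    simp only at hab hsq huv hb ⊢
    set e := a.sqrt with he
    have ha : a ≠ 0 := by
      intro h0; rw [h0, zero_mul] at hab; exact hn hab.symm
    have he0 : 0 < e := by
      rcases Nat.eq_zero_or_pos e with h0 | h0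
      · exfalso; apply ha; rw [← hsq, h0]
      · exact h0
    have harg : (e * v) * (e * u) / e ^ 2 = b := by
      rw [show (e * v) * (e * u) = e ^ 2 * (v * u) by ring,
        Nat.mul_div_cancel_left _ (pow_pos he0 2), show v * u = u * v by ring, huv]
    rw [harg]
    push_cast
    rw [Complex.natCast_mul_natCast_cpow, Complex.natCast_mul_natCast_cpow]
    have hee : ((e : ℂ)) ^ (-(Complex.I * t)) * ((e : ℂ)) ^ (Complex.I * t) = 1 := by
      rw [← Complex.cpow_add _ _ (by exact_mod_cast he0.ne')]
      simp
    calc f b * ((u : ℂ) ^ (Complex.I * t) * (v : ℂ) ^ (-(Complex.I * t)))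
        = ((e : ℂ) ^ (-(Complex.I * t)) * (e : ℂ) ^ (Complex.I * t)) *
            (f b * ((u : ℂ) ^ (Complex.I * t) * (v : ℂ) ^ (-(Complex.I * t)))) := by
          rw [hee, one_mul]
      _ = (e : ℂ) ^ (-(Complex.I * t)) * (v : ℂ) ^ (-(Complex.I * t)) *
            ((e : ℂ) ^ (Complex.I * t) * (u : ℂ) ^ (Complex.I * t)) * f b := by ring

lemma cSq_square (m : ℕ) : cSq ((m + 1) ^ 2) = 1 := by
  rw [cSq]
  simp only [Nat.sqrt_eq']
  rw [if_pos (by ring)]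

lemma term_cSq_square (s : ℂ) (m : ℕ) :
    LSeries.term cSq s ((m + 1) ^ 2) = ((m + 1 : ℕ) : ℂ) ^ (-(2 * s)) := by
  rw [LSeries.term_of_ne_zero (pow_ne_zero 2 (Nat.succ_ne_zero m)), cSq_square]
  rw [show ((((m + 1) ^ 2 : ℕ)) : ℂ) = ((m + 1 : ℕ) : ℂ) ^ (2 : ℕ) by push_cast; ring]
  rw [show (-(2 * s)) = ((2 : ℕ) : ℂ) * (-s) by push_cast; ring]
  rw [Complex.natCast_cpow_natCast_mul, Complex.cpow_neg, one_div]

lemma tsum_cSq (s : ℂ) : ∑' n : ℕ, ((n + 1 : ℕ) : ℂ) ^ (-(2 * s)) = LSeries cSq s := by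
  rw [LSeries]
  rw [← tsum_congr (term_cSq_square s)]
  refine Function.Injective.tsum_eq (g := fun m : ℕ => (m + 1) ^ 2) ?_ ?_
  · intro a b h
    have h' : a + 1 = b + 1 := Nat.pow_left_injective (by norm_num) h
    omega
  · intro x hx
    have hx0 : x ≠ 0 := by
      rintro rfl
      exact hx (LSeries.term_zero ..)
    have hcx : cSq x ≠ 0 := by
      intro h0
      apply hx
      rw [LSeries.term_of_ne_zero hx0, h0, zero_div]
    have hsq : x.sqrt * x.sqrt = x := by
      by_contra hq
      exact hcx (if_neg hq)
    have hs0 : x.sqrt ≠ 0 := by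
      intro h0; apply hx0; rw [← hsq, h0]
    refine ⟨x.sqrt - 1, ?_⟩
    have h1 : x.sqrt - 1 + 1 = x.sqrt := Nat.succ_pred_eq_of_pos (Nat.pos_of_ne_zero hs0)
    show (x.sqrt - 1 + 1) ^ 2 = x
    rw [h1, pow_two]
    exact hsq


/-- (The Dirichlet series identity \eqref{eqn:Dirserieslambdalambdat}.)
If `λ : ℕ₊ → ℂ` satisfies the Hecke relations and `|λ(n)| ≤ A n^θ`, then for `t ∈ ℝ` and
`Re(s) > 1 + θ` all four series converge absolutely and
`(Σ n^{-2s})(Σ λ(n) λ(n,t) n^{-s}) = (Σ λ(n) n^{-(s+it)})(Σ λ(n) n^{-(s-it)})`. -/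
theorem stmt12 (f : ℕ → ℂ) (hf1 : f 1 = 1)
    (hHecke : ∀ m n : ℕ, 0 < m → 0 < n →
      f m * f n = ∑ d ∈ (Nat.gcd m n).divisors, f (m * n / d ^ 2))
    (A θ : ℝ) (hA : 0 < A) (hθ : 0 ≤ θ)
    (hbound : ∀ n : ℕ, 1 ≤ n → ‖f n‖ ≤ A * (n : ℝ) ^ θ)
    (t : ℝ) (s : ℂ) (hs : 1 + θ < s.re) :
    Summable (fun n : ℕ => ‖((n + 1 : ℕ) : ℂ) ^ (-(2 * s))‖) ∧
    Summable (fun n : ℕ => ‖f (n + 1) * lamT (n + 1) t * ((n + 1 : ℕ) : ℂ) ^ (-s)‖) ∧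
    Summable (fun n : ℕ => ‖f (n + 1) * ((n + 1 : ℕ) : ℂ) ^ (-(s + Complex.I * t))‖) ∧
    Summable (fun n : ℕ => ‖f (n + 1) * ((n + 1 : ℕ) : ℂ) ^ (-(s - Complex.I * t))‖) ∧
    (∑' n : ℕ, ((n + 1 : ℕ) : ℂ) ^ (-(2 * s))) *
        (∑' n : ℕ, f (n + 1) * lamT (n + 1) t * ((n + 1 : ℕ) : ℂ) ^ (-s)) =
      (∑' n : ℕ, f (n + 1) * ((n + 1 : ℕ) : ℂ) ^ (-(s + Complex.I * t))) *
        (∑' n : ℕ, f (n + 1) * ((n + 1 : ℕ) : ℂ) ^ (-(s - Complex.I * t))) := by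
  classical
  have hσ1 : 1 < s.re := by linarith
  set A' : ℝ := max A 1 with hA'def
  have hA'1 : (1 : ℝ) ≤ A' := le_max_right A 1
  have hA'0 : (0 : ℝ) < A' := lt_of_lt_of_le one_pos hA'1
  have hbound' : ∀ n : ℕ, n ≠ 0 → ‖f n‖ ≤ A' * (n : ℝ) ^ θ := by
    intro n hn
    have h1 := hbound n (Nat.one_le_iff_ne_zero.mpr hn)
    have h2 : (0 : ℝ) ≤ (n : ℝ) ^ θ := Real.rpow_nonneg (Nat.cast_nonneg n) θ
    refine h1.trans ?_
    have h3 := le_max_left A 1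
    nlinarith
  have hθs : θ + 1 < s.re := by linarith
  have hrpow_nonneg : ∀ n : ℕ, (0 : ℝ) ≤ (n : ℝ) ^ θ :=
    fun n => Real.rpow_nonneg (Nat.cast_nonneg n) θ
  have hrpow_ge1 : ∀ n : ℕ, n ≠ 0 → (1 : ℝ) ≤ (n : ℝ) ^ θ := by
    intro n hn
    have h1 : (1 : ℝ) ≤ (n : ℝ) := by exact_mod_cast Nat.one_le_iff_ne_zero.mpr hn
    calc (1 : ℝ) = (n : ℝ) ^ (0 : ℝ) := (Real.rpow_zero _).symm
      _ ≤ (n : ℝ) ^ θ := Real.rpow_le_rpow_of_exponent_le h1 hθ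
  have hDpos : ∀ n : ℕ, n ≠ 0 → (1 : ℝ) ≤ (n.divisors.card : ℝ) := by
    intro n hn
    have h1 : 0 < n.divisors.card :=
      Finset.card_pos.mpr ⟨1, Nat.one_mem_divisors.mpr hn⟩
    exact_mod_cast h1
  have hnormu : ∀ n : ℕ, ‖uMaj A' θ n‖ = A' * (n : ℝ) ^ θ := by
    intro n
    simp only [uMaj]
    rw [Complex.norm_real, Real.norm_eq_abs, _root_.abs_of_nonneg (by positivity)]
  have husum : LSeriesSummable (uMaj A' θ) s := by
    refine LSeriesSummable_of_le_const_mul_rpow (x := θ + 1) hθs ⟨A', fun n hn => ?_⟩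
    rw [hnormu, add_sub_cancel_right]
  have hunorm : Summable (fun n => ‖LSeries.term (uMaj A' θ) s n‖) :=
    summable_norm_iff.mpr husum
  have huu : LSeriesSummable (uMaj A' θ ⍟ uMaj A' θ) s := husum.convolution husum
  have huunorm : Summable (fun n => ‖LSeries.term (uMaj A' θ ⍟ uMaj A' θ) s n‖) :=
    summable_norm_iff.mpr huu
  have hnormuu : ∀ n : ℕ,
      ‖(uMaj A' θ ⍟ uMaj A' θ) n‖ = (n.divisors.card : ℝ) * (A' * A' * (n : ℝ) ^ θ) := by
    intro n
    rw [uMaj_conv_val, Complex.norm_real, Real.norm_eq_abs, _root_.abs_of_nonneg (by positivity)]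
  -- comparison for h := f · lamT
  have hcmp_h : ∀ n, ‖LSeries.term (fun k => f k * lamT k t) s n‖
      ≤ ‖LSeries.term (uMaj A' θ ⍟ uMaj A' θ) s n‖ := by
    intro n
    rcases eq_or_ne n 0 with rfl | hn
    · simp [LSeries.term_zero]
    refine LSeries.norm_term_le s ?_
    rw [hnormuu]
    calc ‖f n * lamT n t‖ = ‖f n‖ * ‖lamT n t‖ := norm_mul _ _
      _ ≤ (A' * (n : ℝ) ^ θ) * (n.divisors.card : ℝ) := by
          refine mul_le_mul (hbound' n hn) (lamT_norm_le n t) (norm_nonneg _) ?_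
          positivity
      _ ≤ (A' * A' * (n : ℝ) ^ θ) * (n.divisors.card : ℝ) := by
          have h3 : A' ≤ A' * A' := by nlinarith
          have h4 : (0 : ℝ) ≤ (n.divisors.card : ℝ) := Nat.cast_nonneg _
          have h5 : A' * (n : ℝ) ^ θ ≤ A' * A' * (n : ℝ) ^ θ :=
            mul_le_mul_of_nonneg_right h3 (hrpow_nonneg n)
          exact mul_le_mul_of_nonneg_right h5 h4
      _ = (n.divisors.card : ℝ) * (A' * A' * (n : ℝ) ^ θ) := by ring
  have hhnorm : Summable (fun n => ‖LSeries.term (fun k => f k * lamT k t) s n‖) :=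
    Summable.of_nonneg_of_le (fun _ => norm_nonneg _) hcmp_h huunorm
  have hhsum : LSeriesSummable (fun k => f k * lamT k t) s := Summable.of_norm hhnorm
  -- comparison for gp
  have hcmp_gp : ∀ n, ‖LSeries.term (fun k => f k * (k : ℂ) ^ (-(Complex.I * t))) s n‖
      ≤ ‖LSeries.term (uMaj A' θ) s n‖ := by
    intro n
    rcases eq_or_ne n 0 with rfl | hn
    · simp [LSeries.term_zero]
    refine LSeries.norm_term_le s ?_
    rw [hnormu, norm_mul, norm_nat_cpow_eq_one n (Nat.pos_of_ne_zero hn) (neg_I_mul_re t),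
      mul_one]
    exact hbound' n hn
  have hgpnorm : Summable
      (fun n => ‖LSeries.term (fun k => f k * (k : ℂ) ^ (-(Complex.I * t))) s n‖) :=
    Summable.of_nonneg_of_le (fun _ => norm_nonneg _) hcmp_gp hunorm
  have hgpsum : LSeriesSummable (fun k => f k * (k : ℂ) ^ (-(Complex.I * t))) s :=
    Summable.of_norm hgpnorm
  -- comparison for gm
  have hcmp_gm : ∀ n, ‖LSeries.term (fun k => f k * (k : ℂ) ^ (Complex.I * t)) s n‖
      ≤ ‖LSeries.term (uMaj A' θ) s n‖ := by
    intro n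
    rcases eq_or_ne n 0 with rfl | hn
    · simp [LSeries.term_zero]
    refine LSeries.norm_term_le s ?_
    rw [hnormu, norm_mul, norm_nat_cpow_eq_one n (Nat.pos_of_ne_zero hn) (I_mul_re t), mul_one]
    exact hbound' n hn
  have hgmnorm : Summable
      (fun n => ‖LSeries.term (fun k => f k * (k : ℂ) ^ (Complex.I * t)) s n‖) :=
    Summable.of_nonneg_of_le (fun _ => norm_nonneg _) hcmp_gm hunorm
  have hgmsum : LSeriesSummable (fun k => f k * (k : ℂ) ^ (Complex.I * t)) s :=
    Summable.of_norm hgmnorm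
  -- comparison for cSq
  have hcmp_c : ∀ n, ‖LSeries.term cSq s n‖ ≤ ‖LSeries.term (uMaj A' θ) s n‖ := by
    intro n
    rcases eq_or_ne n 0 with rfl | hn
    · simp [LSeries.term_zero]
    refine LSeries.norm_term_le s ?_
    rw [hnormu]
    have h1 : ‖cSq n‖ ≤ 1 := by
      rw [cSq]
      split_ifs <;> simp
    refine h1.trans ?_
    calc (1 : ℝ) = 1 * 1 := (one_mul 1).symm
      _ ≤ A' * (n : ℝ) ^ θ :=
          mul_le_mul hA'1 (hrpow_ge1 n hn) one_pos.le hA'0.le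
  have hcnorm : Summable (fun n => ‖LSeries.term cSq s n‖) :=
    Summable.of_nonneg_of_le (fun _ => norm_nonneg _) hcmp_c hunorm
  have hcsum : LSeriesSummable cSq s := Summable.of_norm hcnorm
  -- term translations
  have e2 : ∀ n : ℕ, f (n + 1) * lamT (n + 1) t * ((n + 1 : ℕ) : ℂ) ^ (-s)
      = LSeries.term (fun k => f k * lamT k t) s (n + 1) :=
    fun n => (term_succ (fun k => f k * lamT k t) s n).symm
  have e3 : ∀ n : ℕ, f (n + 1) * ((n + 1 : ℕ) : ℂ) ^ (-(s + Complex.I * t))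
      = LSeries.term (fun k => f k * (k : ℂ) ^ (-(Complex.I * t))) s (n + 1) :=
    fun n => (term_gp f s t n).symm
  have e4 : ∀ n : ℕ, f (n + 1) * ((n + 1 : ℕ) : ℂ) ^ (-(s - Complex.I * t))
      = LSeries.term (fun k => f k * (k : ℂ) ^ (Complex.I * t)) s (n + 1) :=
    fun n => (term_gm f s t n).symm
  refine ⟨?_, ?_, ?_, ?_, ?_⟩
  · -- first summability
    have e1 : ∀ n : ℕ, ‖((n + 1 : ℕ) : ℂ) ^ (-(2 * s))‖ = ((n + 1 : ℕ) : ℝ) ^ (-(2 * s.re)) := by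
      intro n
      rw [Complex.norm_natCast_cpow_of_pos (Nat.succ_pos n)]
      congr 1
      simp
    simp only [e1]
    have hsum : Summable (fun n : ℕ => ((n : ℝ)) ^ (-(2 * s.re))) :=
      Real.summable_nat_rpow.mpr (by linarith)
    exact (summable_nat_add_iff 1).mpr hsum
  · simp only [e2]
    exact (summable_nat_add_iff
      (f := fun n => ‖LSeries.term (fun k => f k * lamT k t) s n‖) 1).mpr hhnorm
  · simp only [e3]
    exact (summable_nat_add_iff
      (f := fun n => ‖LSeries.term (fun k => f k * (k : ℂ) ^ (-(Complex.I * t))) s n‖) 1).mpr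
      hgpnorm
  · simp only [e4]
    exact (summable_nat_add_iff
      (f := fun n => ‖LSeries.term (fun k => f k * (k : ℂ) ^ (Complex.I * t)) s n‖) 1).mpr
      hgmnorm
  · -- the identity
    have E1 := tsum_cSq s
    have E2 : (∑' n : ℕ, f (n + 1) * lamT (n + 1) t * ((n + 1 : ℕ) : ℂ) ^ (-s))
        = LSeries (fun k => f k * lamT k t) s := by
      rw [tsum_congr e2, tsum_shift _ (LSeries.term_zero ..)]
      rfl
    have E3 : (∑' n : ℕ, f (n + 1) * ((n + 1 : ℕ) : ℂ) ^ (-(s + Complex.I * t)))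
        = LSeries (fun k => f k * (k : ℂ) ^ (-(Complex.I * t))) s := by
      rw [tsum_congr e3, tsum_shift _ (LSeries.term_zero ..)]
      rfl
    have E4 : (∑' n : ℕ, f (n + 1) * ((n + 1 : ℕ) : ℂ) ^ (-(s - Complex.I * t)))
        = LSeries (fun k => f k * (k : ℂ) ^ (Complex.I * t)) s := by
      rw [tsum_congr e4, tsum_shift _ (LSeries.term_zero ..)]
      rfl
    rw [E1, E2, E3, E4]
    rw [← LSeries_convolution' hcsum hhsum, ← LSeries_convolution' hgpsum hgmsum]
    rw [key_conv f hHecke t]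
end

section
/- Let λ : ℕ₊ → ℂ satisfy the Hecke relations, and suppose there exist A > 0 and θ ≥ 0 with |λ(n)| ≤ A·n^θ for all n ≥ 1. Then for every s ∈ ℂ with Re(s) > 1 + 2θ, the series Σ_{n≥1} λ(n)²·n^{−s}, Σ_{n≥1} n^{−s}, and Σ_{n≥1} λ(n²)·n^{−s} converge absolutely, and Σ_{n≥1} λ(n)²·n^{−s} = (Σ_{n≥1} n^{−s}) · (Σ_{n≥1} λ(n²)·n^{−s}). -/
open Complex LSeries
open scoped LSeries.notation

/-- Auxiliary: convert an `LSeriesSummable` statement into the shifted-sum form. -/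
lemma stmt13_aux {g : ℕ → ℂ} {s : ℂ} (h : LSeriesSummable g s) :
    Summable (fun n : ℕ => ‖g (n + 1) * ((n + 1 : ℕ) : ℂ) ^ (-s)‖) ∧
    (∑' n : ℕ, g (n + 1) * ((n + 1 : ℕ) : ℂ) ^ (-s)) = LSeries g s := by
  have hterm : ∀ n : ℕ, LSeries.term g s (n + 1) = g (n + 1) * ((n + 1 : ℕ) : ℂ) ^ (-s) := by
    intro n
    rw [LSeries.term_of_ne_zero (Nat.succ_ne_zero n), Complex.cpow_neg, div_eq_mul_inv]
  have hnorm : Summable fun n => ‖LSeries.term g s n‖ := summable_norm_iff.mpr h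
  constructor
  · simpa only [hterm] using (summable_nat_add_iff 1).mpr hnorm
  · have h0 := Summable.tsum_eq_zero_add h
    rw [LSeries.term_zero, zero_add] at h0
    simp only [hterm] at h0
    exact h0.symm

/-- (The Dirichlet series identity \eqref{eqn:Dirserieslambda2}.)
If `λ : ℕ₊ → ℂ` satisfies the Hecke relations and `|λ(n)| ≤ A n^θ`, then for
`Re(s) > 1 + 2θ` the three series converge absolutely and
`Σ λ(n)² n^{-s} = (Σ n^{-s})(Σ λ(n²) n^{-s})`. -/
theorem stmt13 (f : ℕ → ℂ) (hf1 : f 1 = 1)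
    (hHecke : ∀ m n : ℕ, 0 < m → 0 < n →
      f m * f n = ∑ d ∈ (Nat.gcd m n).divisors, f (m * n / d ^ 2))
    (A θ : ℝ) (hA : 0 < A) (hθ : 0 ≤ θ)
    (hbound : ∀ n : ℕ, 1 ≤ n → ‖f n‖ ≤ A * (n : ℝ) ^ θ)
    (s : ℂ) (hs : 1 + 2 * θ < s.re) :
    Summable (fun n : ℕ => ‖f (n + 1) ^ 2 * ((n + 1 : ℕ) : ℂ) ^ (-s)‖) ∧
    Summable (fun n : ℕ => ‖((n + 1 : ℕ) : ℂ) ^ (-s)‖) ∧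
    Summable (fun n : ℕ => ‖f ((n + 1) ^ 2) * ((n + 1 : ℕ) : ℂ) ^ (-s)‖) ∧
    (∑' n : ℕ, f (n + 1) ^ 2 * ((n + 1 : ℕ) : ℂ) ^ (-s)) =
      (∑' n : ℕ, ((n + 1 : ℕ) : ℂ) ^ (-s)) *
        (∑' n : ℕ, f ((n + 1) ^ 2) * ((n + 1 : ℕ) : ℂ) ^ (-s)) := by
  set F : ℕ → ℂ := fun n => f n ^ 2 with hFdef
  set G : ℕ → ℂ := fun n => f (n ^ 2) with hGdef
  set O : ℕ → ℂ := fun _ => (1 : ℂ) with hOdef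
  have hrpow : ∀ n : ℕ, n ≠ 0 → ((n : ℝ) ^ 2) ^ θ = (n : ℝ) ^ (1 + 2 * θ - 1) := by
    intro n hn
    rw [show (1 + 2 * θ - 1) = 2 * θ by ring, ← Real.rpow_natCast ((n : ℝ)) 2,
      ← Real.rpow_mul (Nat.cast_nonneg n)]
    norm_num [mul_comm θ 2]
  -- Summability of the three L-series
  have hGsum : LSeriesSummable G s := by
    refine LSeriesSummable_of_le_const_mul_rpow hs ⟨A, fun n hn => ?_⟩
    have h1 : (1 : ℕ) ≤ n ^ 2 := Nat.one_le_iff_ne_zero.mpr (pow_ne_zero 2 hn)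
    have hb := hbound (n ^ 2) h1
    rw [Nat.cast_pow] at hb
    calc ‖G n‖ ≤ A * ((n : ℝ) ^ 2) ^ θ := hb
      _ = A * (n : ℝ) ^ (1 + 2 * θ - 1) := by rw [hrpow n hn]
  have hFsum : LSeriesSummable F s := by
    refine LSeriesSummable_of_le_const_mul_rpow hs ⟨A ^ 2, fun n hn => ?_⟩
    have hb := hbound n (Nat.one_le_iff_ne_zero.mpr hn)
    have hb2 : ‖f n‖ ^ 2 ≤ (A * (n : ℝ) ^ θ) ^ 2 :=
      pow_le_pow_left₀ (norm_nonneg _) hb 2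
    calc ‖F n‖ = ‖f n‖ ^ 2 := by simp [hFdef, norm_pow]
      _ ≤ (A * (n : ℝ) ^ θ) ^ 2 := hb2
      _ = A ^ 2 * ((n : ℝ) ^ 2) ^ θ := by
          rw [mul_pow, ← Real.rpow_natCast ((n : ℝ) ^ θ) 2,
            ← Real.rpow_mul (Nat.cast_nonneg n), ← Real.rpow_natCast ((n : ℝ)) 2,
            ← Real.rpow_mul (Nat.cast_nonneg n)]
          norm_num [mul_comm θ 2]
      _ = A ^ 2 * (n : ℝ) ^ (1 + 2 * θ - 1) := by rw [hrpow n hn]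
  have hOsum : LSeriesSummable O s := by
    refine LSeriesSummable_of_le_const_mul_rpow hs ⟨1, fun n hn => ?_⟩
    have h1 : (1 : ℝ) ≤ (n : ℝ) := by exact_mod_cast Nat.one_le_iff_ne_zero.mpr hn
    have : (1 : ℝ) ≤ (n : ℝ) ^ (1 + 2 * θ - 1) :=
      Real.one_le_rpow h1 (by linarith)
    simpa [hOdef] using this
  -- pointwise identity: F = O ⍟ G away from 0
  have hconv : ∀ {n : ℕ}, n ≠ 0 → F n = (O ⍟ G) n := by
    intro n hn
    rw [convolution_def]
    simp only
    rw [Nat.sum_divisorsAntidiagonal (f := fun a b => O a * G b)]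
    have hH := hHecke n n (Nat.pos_of_ne_zero hn) (Nat.pos_of_ne_zero hn)
    rw [Nat.gcd_self] at hH
    have : F n = ∑ d ∈ n.divisors, f (n * n / d ^ 2) := by
      rw [hFdef]; simpa [sq] using hH
    rw [this]
    refine Finset.sum_congr rfl fun d hd => ?_
    obtain ⟨hdvd, -⟩ := Nat.mem_divisors.mp hd
    obtain ⟨e, rfl⟩ := hdvd
    have hd0 : d ≠ 0 := by
      rintro rfl; simp at hd
    have : d * e * (d * e) / d ^ 2 = e ^ 2 := by
      rw [show d * e * (d * e) = d ^ 2 * e ^ 2 by ring,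
        Nat.mul_div_cancel_left _ (pow_pos (Nat.pos_of_ne_zero hd0) 2)]
    rw [this, hOdef, hGdef]
    simp [Nat.mul_div_cancel_left _ (Nat.pos_of_ne_zero hd0)]
  -- the L-series identity
  have hLid : LSeries F s = LSeries O s * LSeries G s := by
    rw [LSeries_congr hconv s]
    exact LSeries_convolution' hOsum hGsum
  obtain ⟨hFs, hFt⟩ := stmt13_aux hFsum
  obtain ⟨hOs, hOt⟩ := stmt13_aux hOsum
  obtain ⟨hGs, hGt⟩ := stmt13_aux hGsum
  simp only [hOdef, one_mul] at hOs hOt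
  refine ⟨hFs, hOs, hGs, ?_⟩
  rw [show (fun n : ℕ => f (n + 1) ^ 2 * ((n + 1 : ℕ) : ℂ) ^ (-s))
      = fun n : ℕ => F (n + 1) * ((n + 1 : ℕ) : ℂ) ^ (-s) from rfl,
    show (fun n : ℕ => f ((n + 1) ^ 2) * ((n + 1 : ℕ) : ℂ) ^ (-s))
      = fun n : ℕ => G (n + 1) * ((n + 1 : ℕ) : ℂ) ^ (-s) from rfl,
    hFt, hGt, hOt, hLid]
end
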